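/- arXiv:2209.10443 — 3 statements merged into one kernel-verified Lean document; each statement's English description precedes it below -/
import Mathlib

section
/- Let r ≥ 3, A ∈ 𝒯_r, and let e_0 ∈ E(A) be an edge of alpha-type. Then there exists a point q ∈ U_A ∩ U_{α_{e_0}A} ∩ X_r(ℝ) whose order is the same as the order of A. -/
noncomputable section

/-- A plane (rooted) binary tree with leaves labeled by elements of `Fin r`. -/
inductive PTree (r : ℕ) : Type
  | leaf : Fin r → PTree r
  | node : PTree r → PTree r → PTree r

namespace PTree

variable {r : ℕ}

/-- The labels of the leaves of the tree, listed from left to right. -/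
def leafLabels : PTree r → List (Fin r)
  | .leaf i => [i]
  | .node l t => l.leafLabels ++ t.leafLabels

/-- `A ∈ 𝒯_r`: the `r` leaves of `A` are labeled bijectively by `Fin r`. -/
def IsTree (A : PTree r) : Prop :=
  A.leafLabels.Nodup ∧ A.leafLabels.length = r

/-- The label of the rightmost leaf of the tree. -/
def rightmost : PTree r → Fin r
  | .leaf i => i
  | .node _ t => t.rightmost

/-- The subtree of a tree at the address `p` (`false` = go to the left child,
`true` = go to the right child), if the address is valid. -/
def subtreeAt : PTree r → List Bool → Option (PTree r)
  | t, [] => some t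
  | .leaf _, _ :: _ => none
  | .node l t, b :: p => (if b then t else l).subtreeAt p

/-- `p` is the address of an internal (non-leaf) vertex of `A`; the set of such
addresses is `V(A)`. -/
def IsVertex (A : PTree r) (p : List Bool) : Prop :=
  ∃ l t : PTree r, A.subtreeAt p = some (.node l t)

/-- `p` is the address of the lower endpoint `d(e)` of an internal edge `e` of
`A` (an edge not adjacent to a leaf); the upper endpoint `u(e)` is at the
address `p.dropLast`.  The set of such addresses is `E(A)`. -/
def IsEdge (A : PTree r) (p : List Bool) : Prop :=
  p ≠ [] ∧ A.IsVertex p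

/-- The type `E(A)` of internal edges of `A`. -/
abbrev Edge (A : PTree r) : Type := {p : List Bool // A.IsEdge p}

/-- `x_v = z_{L(v)} − z_{R(v)}` for the internal vertex `v` given as the
subtree rooted at it (junk value `0` at leaves). -/
def xval (z : Fin r → ℂ) : PTree r → ℂ
  | .leaf _ => 0
  | .node l t => z l.rightmost - z t.rightmost

/-- The coordinate `x_v` for the vertex `v` of `A` with address `p`. -/
def xAt (A : PTree r) (z : Fin r → ℂ) (p : List Bool) : ℂ :=
  match A.subtreeAt p with
  | some t => xval z t
  | none => 0

/-- The coordinate `ζ_e = x_{d(e)} / x_{u(e)}` for the edge of `A` whose lower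
endpoint has address `p` (its upper endpoint has address `p.dropLast`). -/
def zetaAt (A : PTree r) (z : Fin r → ℂ) (p : List Bool) : ℂ :=
  xAt A z p / xAt A z p.dropLast

/-- `Leaf(e)`: the labels of the leaves descending from the vertex of `A` with
address `p`. -/
def leavesAt (A : PTree r) (p : List Bool) : List (Fin r) :=
  ((A.subtreeAt p).map leafLabels).getD []

/-- The label of the rightmost leaf descending from the vertex of `A` with
address `p`. -/
def rightmostAt (A : PTree r) (p : List Bool) : Option (Fin r) :=
  (A.subtreeAt p).map rightmost

end PTree

/-- The configuration space `X_r = {(z_1,…,z_r) ∈ ℂ^r : z_i ≠ z_j for i ≠ j}`. -/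
def ConfigSpace (r : ℕ) : Set (Fin r → ℂ) :=
  {z | ∀ i j : Fin r, i ≠ j → z i ≠ z j}

namespace PTree

variable {r : ℕ}

/-- The `A`-coordinate map `Ψ_A = (z_A, x_A, (ζ_e)_{e ∈ E(A)})`, where
`z_A = z_{r_A}` (`r_A` the rightmost leaf of `A`) and `x_A = x_{t_A}` (`t_A`
the root of `A`). -/
def psi (A : PTree r) (z : Fin r → ℂ) : ℂ × ℂ × (A.Edge → ℂ) :=
  (z A.rightmost, xval z A, fun e => A.zetaAt z e.1)

/-- The variable index type for the polynomial ring
`ℂ[z_A, x_A, ζ_e (e ∈ E(A))]`. -/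
abbrev Idx (A : PTree r) : Type := Unit ⊕ Unit ⊕ A.Edge

/-- The point of `ℂ^{Idx A}` corresponding to `w = (z_A, x_A, (ζ_e)_e)`. -/
def assign (A : PTree r) (w : ℂ × ℂ × (A.Edge → ℂ)) : A.Idx → ℂ :=
  Sum.elim (fun _ => w.1) (Sum.elim (fun _ => w.2.1) fun e => w.2.2 e)

/-- The polynomial map `Φ_A : ℂ × ℂ × ℂ^{E(A)} → ℂ^r` determined by a family
of polynomials `P`. -/
def phiMap (A : PTree r) (P : Fin r → MvPolynomial A.Idx ℂ)
    (w : ℂ × ℂ × (A.Edge → ℂ)) : Fin r → ℂ :=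
  fun i => MvPolynomial.eval (A.assign w) (P i)

/-- `Φ_A ∘ Ψ_A = id` on `X_r`. -/
def PhiPsiId (A : PTree r) (P : Fin r → MvPolynomial A.Idx ℂ) : Prop :=
  ∀ z ∈ ConfigSpace r, A.phiMap P (A.psi z) = z

/-- `Ψ_A ∘ Φ_A = id` on `ℂ × ℂ^× × (ℂ^×)^{E(A)}`. -/
def PsiPhiId (A : PTree r) (P : Fin r → MvPolynomial A.Idx ℂ) : Prop :=
  ∀ w : ℂ × ℂ × (A.Edge → ℂ), w.2.1 ≠ 0 → (∀ e, w.2.2 e ≠ 0) →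
    A.psi (A.phiMap P w) = w

end PTree

/-- The cut plane `ℂ^cut = ℂ ∖ ℝ_{≤0}`. -/
def cutPlane : Set ℂ := {w : ℂ | 0 < w.re ∨ w.im ≠ 0}

namespace PTree

variable {r : ℕ}

/-- The region `ℂ × ℂ^cut × ∏_{e ∈ E(A)} 𝔻_{p_e}^cut` in `ℂ × ℂ × ℂ^{E(A)}`. -/
def cutRegion (A : PTree r) (p : A.Edge → ℝ) : Set (ℂ × ℂ × (A.Edge → ℂ)) :=
  {w | w.2.1 ∈ cutPlane ∧ ∀ e, w.2.2 e ∈ cutPlane ∧ ‖w.2.2 e‖ < p e}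

/-- The tuple `p = (p_e)_{e∈E(A)}` is `A`-admissible:
`Φ_A(ℂ × ℂ^× × ∏_e 𝔻_{p_e}^×) ⊆ X_r`. -/
def Admissible (A : PTree r) (P : Fin r → MvPolynomial A.Idx ℂ)
    (p : A.Edge → ℝ) : Prop :=
  ∀ w : ℂ × ℂ × (A.Edge → ℂ), w.2.1 ≠ 0 →
    (∀ e, w.2.2 e ≠ 0 ∧ ‖w.2.2 e‖ < p e) →
      A.phiMap P w ∈ ConfigSpace r

/-- `U_A^𝔭 = Φ_A(ℂ × ℂ^cut × ∏_e 𝔻_{p_e}^cut)`. -/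
def UAp (A : PTree r) (P : Fin r → MvPolynomial A.Idx ℂ) (p : A.Edge → ℝ) :
    Set (Fin r → ℂ) :=
  A.phiMap P '' A.cutRegion p

/-- `U_A = ⋃ U_A^𝔭`, the union over all `A`-admissible tuples of positive
reals `𝔭`. -/
def UA (A : PTree r) (P : Fin r → MvPolynomial A.Idx ℂ) : Set (Fin r → ℂ) :=
  ⋃ (p : A.Edge → ℝ) (_ : (∀ e, 0 < p e) ∧ A.Admissible P p), A.UAp P p

end PTree

namespace PTree

variable {r : ℕ}

/-- Replace the subtree of a tree at the address `p` by `s` (returning the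
tree unchanged below an invalid address). -/
def replaceAt : PTree r → List Bool → PTree r → PTree r
  | _, [], s => s
  | .leaf i, _ :: _, _ => .leaf i
  | .node l t, b :: p, s =>
      if b then .node l (t.replaceAt p s) else .node (l.replaceAt p s) t

end PTree

/-- A point `q ∈ X_r(ℝ)` has the same order as `A`: for all `i ≠ j` one has
`q_i < q_j` exactly when leaf `i` lies to the right of leaf `j` in the planar
embedding of `A` (i.e. `i` occurs later than `j` in the left-to-right list of
leaf labels of `A`). -/
def SameOrder {r : ℕ} (A : PTree r) (q : Fin r → ℂ) : Prop :=
  ∀ i j : Fin r, i ≠ j →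
    ((q i).re < (q j).re ↔ A.leafLabels.idxOf j < A.leafLabels.idxOf i)


namespace StmtAux

open PTree

variable {r : ℕ}

lemma subtreeAt_append (t : PTree r) (a b : List Bool) :
    t.subtreeAt (a ++ b) = (t.subtreeAt a).bind (fun u => u.subtreeAt b) := by
  induction a generalizing t with
  | nil => simp [PTree.subtreeAt]
  | cons x a ih =>
    cases t with
    | leaf i => simp [PTree.subtreeAt]
    | node l s =>
      simp only [List.cons_append, PTree.subtreeAt]
      exact ih _

lemma isVertex_prefix {t : PTree r} {a b : List Bool} (h : t.IsVertex (a ++ b)) :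
    t.IsVertex a := by
  obtain ⟨l1, s1, h⟩ := h
  rw [subtreeAt_append] at h
  cases hu : t.subtreeAt a with
  | none => rw [hu] at h; simp at h
  | some u =>
    rw [hu] at h
    simp only [Option.bind_some] at h
    cases u with
    | leaf i =>
      cases b with
      | nil => simp [PTree.subtreeAt] at h
      | cons c b => simp [PTree.subtreeAt] at h
    | node l2 s2 => exact ⟨l2, s2, hu⟩

lemma edge_of_prefix {t : PTree r} {a b : List Bool} (h : t.IsVertex (a ++ b)) (ha : a ≠ []) :
    t.IsEdge a := ⟨ha, isVertex_prefix h⟩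

lemma subtree_sublist : ∀ (m : List Bool) (t u : PTree r), t.subtreeAt m = some u →
    u.leafLabels.Sublist t.leafLabels := by
  intro m
  induction m with
  | nil => intro t u h; simp [PTree.subtreeAt] at h; subst h; exact List.Sublist.refl _
  | cons b m ih =>
    intro t u h
    cases t with
    | leaf i => simp [PTree.subtreeAt] at h
    | node l s =>
      simp only [PTree.subtreeAt] at h
      cases b with
      | false =>
        simp at h
        exact (ih l u h).trans (by simp [PTree.leafLabels])
      | true =>
        simp at h
        exact (ih s u h).trans (by simp [PTree.leafLabels])

lemma rightmost_mem : ∀ t : PTree r, t.rightmost ∈ t.leafLabels := by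
  intro t
  induction t with
  | leaf i => simp [PTree.rightmost, PTree.leafLabels]
  | node l s ihl ihs => simp [PTree.rightmost, PTree.leafLabels, ihs]

lemma nodup_node {l s : PTree r} (h : (PTree.node l s).leafLabels.Nodup) :
    l.leafLabels.Nodup ∧ s.leafLabels.Nodup ∧ l.leafLabels.Disjoint s.leafLabels := by
  simpa [PTree.leafLabels, List.nodup_append'] using h

lemma subtreeAt_child {t : PTree r} {m : List Bool} {l s : PTree r}
    (h : t.subtreeAt m = some (.node l s)) (b : Bool) :
    t.subtreeAt (m ++ [b]) = some (if b then s else l) := by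
  rw [subtreeAt_append, h]
  cases b <;> simp [PTree.subtreeAt]

lemma replace_labels : ∀ (m : List Bool) (t u s : PTree r), t.subtreeAt m = some u →
    s.leafLabels = u.leafLabels → (t.replaceAt m s).leafLabels = t.leafLabels := by
  intro m
  induction m with
  | nil =>
    intro t u s h hs
    simp [PTree.subtreeAt] at h; subst h
    simpa [PTree.replaceAt] using hs
  | cons b m ih =>
    intro t u s h hs
    cases t with
    | leaf i => simp [PTree.subtreeAt] at h
    | node l s' =>
      simp only [PTree.subtreeAt] at h
      cases b with
      | false =>
        simp at h
        simp [PTree.replaceAt, PTree.leafLabels, ih l u s h hs]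
      | true =>
        simp at h
        simp [PTree.replaceAt, PTree.leafLabels, ih s' u s h hs]

/-- number of internal vertices -/
def Ncount : PTree r → ℕ
  | .leaf _ => 0
  | .node l s => Ncount l + Ncount s + 1

lemma labels_length : ∀ t : PTree r, t.leafLabels.length = Ncount t + 1 := by
  intro t
  induction t with
  | leaf i => simp [PTree.leafLabels, Ncount]
  | node l s ihl ihs => simp [PTree.leafLabels, Ncount, ihl, ihs]; omega

/-! ### delta and separation lemmas -/

def delta (z : Fin r → ℂ) (i : Fin r) : PTree r → ℂ
  | .leaf _ => 0
  | .node l s => if i ∈ s.leafLabels then delta z i s else xval z (.node l s) + delta z i l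

def xsumA (z : Fin r → ℂ) : PTree r → ℝ
  | .leaf _ => 0
  | .node l s => ‖xval z (.node l s)‖ + xsumA z l + xsumA z s

lemma xsumA_nonneg (z : Fin r → ℂ) : ∀ t : PTree r, 0 ≤ xsumA z t := by
  intro t
  induction t with
  | leaf i => simp [xsumA]
  | node l s ihl ihs =>
    simp only [xsumA]
    have := norm_nonneg (xval z (.node l s))
    linarith

lemma delta_eq (z : Fin r → ℂ) {i : Fin r} : ∀ t : PTree r, i ∈ t.leafLabels →
    z i - z t.rightmost = delta z i t := by
  intro t
  induction t with
  | leaf j => intro h; simp [PTree.leafLabels] at h; subst h; simp [delta, PTree.rightmost]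
  | node l s ihl ihs =>
    intro h
    simp only [delta]
    by_cases hs : i ∈ s.leafLabels
    · rw [if_pos hs, ← ihs hs]
      rfl
    · rw [if_neg hs]
      have hl : i ∈ l.leafLabels := by
        simp [PTree.leafLabels] at h
        tauto
      rw [← ihl hl]
      simp only [PTree.xval, PTree.rightmost]
      ring

lemma delta_bound (z : Fin r → ℂ) {i : Fin r} : ∀ t : PTree r, i ∈ t.leafLabels →
    ‖delta z i t‖ ≤ xsumA z t := by
  intro t
  induction t with
  | leaf j => intro _; simp [delta, xsumA]
  | node l s ihl ihs =>
    intro h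
    simp only [delta, xsumA]
    by_cases hs : i ∈ s.leafLabels
    · rw [if_pos hs]
      have := ihs hs
      have h1 := norm_nonneg (xval z (.node l s))
      have h2 := xsumA_nonneg z l
      linarith
    · rw [if_neg hs]
      have hl : i ∈ l.leafLabels := by
        simp [PTree.leafLabels] at h
        tauto
      have := ihl hl
      have h3 := (norm_add_le (xval z (.node l s)) (delta z i l))
      have h2 := xsumA_nonneg z s
      linarith

/-- structural goodness for complex separation -/
def goodC (z : Fin r → ℂ) : PTree r → Prop
  | .leaf _ => True
  | .node l s => xsumA z l + xsumA z s < ‖xval z (.node l s)‖ ∧ goodC z l ∧ goodC z s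

/-- structural goodness for real ordering -/
def goodR (z : Fin r → ℂ) : PTree r → Prop
  | .leaf _ => True
  | .node l s => xsumA z l + xsumA z s < (xval z (.node l s)).re ∧ goodR z l ∧ goodR z s

lemma idx_append_left {α : Type*} [DecidableEq α] {a : α} :
    ∀ (l₁ : List α) (l₂ : List α), a ∈ l₁ → (l₁ ++ l₂).idxOf a = l₁.idxOf a := by
  intro l₁
  induction l₁ with
  | nil => intro l₂ h; simp at h
  | cons b l ih =>
    intro l₂ h
    by_cases hab : a = b
    · subst hab; simp [List.idxOf_cons_self]
    · simp only [List.mem_cons] at h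
      rcases h with h | h
      · exact absurd h hab
      · rw [List.cons_append, List.idxOf_cons_ne _ (by exact fun hc => hab hc.symm),
          List.idxOf_cons_ne _ (by exact fun hc => hab hc.symm), ih l₂ h]

lemma idx_append_right {α : Type*} [DecidableEq α] {a : α} :
    ∀ (l₁ : List α) (l₂ : List α), a ∉ l₁ →
      (l₁ ++ l₂).idxOf a = l₁.length + l₂.idxOf a := by
  intro l₁
  induction l₁ with
  | nil => intro l₂ h; simp
  | cons b l ih =>
    intro l₂ h
    simp only [List.mem_cons, not_or] at h
    rw [List.cons_append, List.idxOf_cons_ne _ (by exact fun hc => h.1 hc.symm)]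
    simp only [List.length_cons]
    rw [ih l₂ h.2]
    omega

lemma ordC (z : Fin r → ℂ) : ∀ t : PTree r, goodC z t → t.leafLabels.Nodup →
    ∀ i j : Fin r, i ∈ t.leafLabels → j ∈ t.leafLabels →
      t.leafLabels.idxOf i < t.leafLabels.idxOf j → z i ≠ z j := by
  intro t
  induction t with
  | leaf k =>
    intro _ _ i j hi hj hij
    simp [PTree.leafLabels] at hi hj
    subst hi; subst hj
    simp at hij
  | node l s ihl ihs =>
    intro hg hnd i j hi hj hij
    obtain ⟨hndl, hnds, hdisj⟩ := nodup_node hnd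
    simp only [PTree.leafLabels, List.mem_append] at hi hj
    have hLab : (PTree.node l s).leafLabels = l.leafLabels ++ s.leafLabels := rfl
    rcases hi with hi | hi
    · rcases hj with hj | hj
      · -- both in l
        rw [hLab, idx_append_left _ _ hi, idx_append_left _ _ hj] at hij
        exact ihl hg.2.1 hndl i j hi hj hij
      · -- i in l, j in s : main case
        intro hzeq
        have h1 := delta_eq z l hi
        have h2 := delta_eq z s hj
        have hkey : z i - z j = delta z i l + xval z (.node l s) - delta z j s := by
          have : xval z (.node l s) = z l.rightmost - z s.rightmost := rfl
          rw [← h1, ← h2, this]; ring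
        have hne : z i - z j ≠ 0 := by
          intro h0
          rw [h0] at hkey
          have : ‖xval z (.node l s)‖ ≤
              ‖delta z i l‖ + ‖delta z j s‖ := by
            have : xval z (.node l s) = delta z j s - delta z i l := by
              have := hkey.symm; linear_combination this
            rw [this]
            have htri := norm_sub_le (delta z j s) (delta z i l)
            linarith
          have b1 := delta_bound z l hi
          have b2 := delta_bound z s hj
          have := hg.1
          linarith
        exact hne (by rw [hzeq]; ring)
    · rcases hj with hj | hj
      · -- i in s, j in l : contradiction with index
        exfalso
        have hil : i ∉ l.leafLabels := fun h => hdisj h hi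
        rw [hLab, idx_append_right _ _ hil, idx_append_left _ _ hj] at hij
        have := List.idxOf_lt_length_iff.mpr hj
        omega
      · -- both in s
        have hil : i ∉ l.leafLabels := fun h => hdisj h hi
        have hjl : j ∉ l.leafLabels := fun h => hdisj h hj
        rw [hLab, idx_append_right _ _ hil, idx_append_right _ _ hjl] at hij
        exact ihs hg.2.2 hnds i j hi hj (by omega)

lemma ordR (z : Fin r → ℂ) : ∀ t : PTree r, goodR z t → t.leafLabels.Nodup →
    ∀ i j : Fin r, i ∈ t.leafLabels → j ∈ t.leafLabels →
      t.leafLabels.idxOf i < t.leafLabels.idxOf j → (z j).re < (z i).re := by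
  intro t
  induction t with
  | leaf k =>
    intro _ _ i j hi hj hij
    simp [PTree.leafLabels] at hi hj
    subst hi; subst hj
    simp at hij
  | node l s ihl ihs =>
    intro hg hnd i j hi hj hij
    obtain ⟨hndl, hnds, hdisj⟩ := nodup_node hnd
    simp only [PTree.leafLabels, List.mem_append] at hi hj
    have hLab : (PTree.node l s).leafLabels = l.leafLabels ++ s.leafLabels := rfl
    rcases hi with hi | hi
    · rcases hj with hj | hj
      · rw [hLab, idx_append_left _ _ hi, idx_append_left _ _ hj] at hij
        exact ihl hg.2.1 hndl i j hi hj hij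
      · -- i in l, j in s : main case
        have h1 := delta_eq z l hi
        have h2 := delta_eq z s hj
        have hkey : z i - z j = delta z i l + xval z (.node l s) - delta z j s := by
          have : xval z (.node l s) = z l.rightmost - z s.rightmost := rfl
          rw [← h1, ← h2, this]; ring
        have hre : (z i).re - (z j).re =
            (delta z i l).re + (xval z (.node l s)).re - (delta z j s).re := by
          have := congrArg Complex.re hkey
          simpa [Complex.sub_re, Complex.add_re] using this
        have b1 : |(delta z i l).re| ≤ xsumA z l :=
          (Complex.abs_re_le_norm _).trans (delta_bound z l hi)
        have b2 : |(delta z j s).re| ≤ xsumA z s :=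
          (Complex.abs_re_le_norm _).trans (delta_bound z s hj)
        have hb1 := abs_le.mp b1
        have hb2 := abs_le.mp b2
        have := hg.1
        have : 0 < (z i).re - (z j).re := by linarith
        linarith
    · rcases hj with hj | hj
      · exfalso
        have hil : i ∉ l.leafLabels := fun h => hdisj h hi
        rw [hLab, idx_append_right _ _ hil, idx_append_left _ _ hj] at hij
        have := List.idxOf_lt_length_iff.mpr hj
        omega
      · have hil : i ∉ l.leafLabels := fun h => hdisj h hi
        have hjl : j ∉ l.leafLabels := fun h => hdisj h hj
        rw [hLab, idx_append_right _ _ hil, idx_append_right _ _ hjl] at hij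
        exact ihs hg.2.2 hnds i j hi hj (by omega)

/-! ### prefix products and the explicit real configuration -/

def relP {M : Type*} [Monoid M] (f : List Bool → M) : List Bool → List Bool → M
  | _, [] => 1
  | p, b :: m => f (p ++ [b]) * relP f (p ++ [b]) m

lemma relP_snoc {M : Type*} [Monoid M] (f : List Bool → M) :
    ∀ (m p : List Bool) (b : Bool), relP f p (m ++ [b]) = relP f p m * f (p ++ m ++ [b]) := by
  intro m
  induction m with
  | nil => intro p b; simp [relP]
  | cons c m ih =>
    intro p b
    simp only [List.cons_append, relP, List.append_eq]
    rw [ih (p ++ [c]) b, mul_assoc]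
    simp [List.append_assoc]

lemma relP_coe (f : List Bool → ℝ) : ∀ (m p : List Bool),
    ((relP f p m : ℝ) : ℂ) = relP (fun u => ((f u : ℝ) : ℂ)) p m := by
  intro m
  induction m with
  | nil => intro p; simp [relP]
  | cons c m ih => intro p; simp [relP, ih]

lemma relP_pos {f : List Bool → ℝ} (hf : ∀ u, 0 < f u) : ∀ (m p : List Bool),
    0 < relP f p m := by
  intro m
  induction m with
  | nil => intro p; simp [relP]
  | cons c m ih => intro p; exact mul_pos (hf _) (ih _)

def go (zt : List Bool → ℝ) : PTree r → List Bool → ℝ → ℝ → Fin r → ℝ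
  | .leaf j, _, _, ρ => fun i => if i = j then ρ else 0
  | .node l s, p, X, ρ => fun i =>
      if i ∈ l.leafLabels then go zt l (p ++ [false]) (zt (p ++ [false]) * X) (ρ + X) i
      else go zt s (p ++ [true]) (zt (p ++ [true]) * X) ρ i

lemma go_rightmost (zt : List Bool → ℝ) : ∀ (t : PTree r) (p : List Bool) (X ρ : ℝ),
    t.leafLabels.Nodup → go zt t p X ρ t.rightmost = ρ := by
  intro t
  induction t with
  | leaf j => intro p X ρ _; simp [go, PTree.rightmost]
  | node l s ihl ihs =>
    intro p X ρ hnd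
    obtain ⟨hndl, hnds, hdisj⟩ := nodup_node hnd
    have hm : s.rightmost ∈ s.leafLabels := rightmost_mem s
    have hnl : (PTree.node l s).rightmost ∉ l.leafLabels := by
      simp only [PTree.rightmost]
      exact fun h => hdisj h hm
    simp only [go, PTree.rightmost] at hnl ⊢
    simp only [hnl, ↓reduceIte]
    exact ihs _ _ _ hnds

lemma go_xval (zt : List Bool → ℝ) : ∀ (t : PTree r), t.leafLabels.Nodup →
    ∀ (m : List Bool) (l' s' : PTree r), t.subtreeAt m = some (.node l' s') →
    ∀ (p : List Bool) (X ρ : ℝ),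
      go zt t p X ρ l'.rightmost - go zt t p X ρ s'.rightmost = X * relP zt p m := by
  intro t
  induction t with
  | leaf j => intro _ m l' s' h; cases m <;> simp [PTree.subtreeAt] at h
  | node l s ihl ihs =>
    intro hnd m l' s' h p X ρ
    obtain ⟨hndl, hnds, hdisj⟩ := nodup_node hnd
    cases m with
    | nil =>
      simp only [PTree.subtreeAt, Option.some_inj] at h
      cases h
      have h1 : l.rightmost ∈ l.leafLabels := rightmost_mem l
      have h2 : s.rightmost ∈ s.leafLabels := rightmost_mem s
      have h2' : s.rightmost ∉ l.leafLabels := fun hc => hdisj hc h2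
      simp only [go]
      rw [if_pos h1, if_neg h2']
      rw [go_rightmost zt l _ _ _ hndl, go_rightmost zt s _ _ _ hnds]
      simp [relP]
    | cons b m' =>
      simp only [PTree.subtreeAt] at h
      cases b with
      | false =>
        simp only [if_false, Bool.false_eq_true, if_neg] at h
        have hsub := subtree_sublist m' l _ h
        have hsub2 : (PTree.node l' s').leafLabels.Sublist l.leafLabels := hsub
        have h1 : l'.rightmost ∈ l.leafLabels := by
          apply hsub2.mem
          simp [PTree.leafLabels, rightmost_mem l']
        have h2 : s'.rightmost ∈ l.leafLabels := by
          apply hsub2.mem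
          simp [PTree.leafLabels, rightmost_mem s']
        simp only [go]
        rw [if_pos h1, if_pos h2]
        rw [ihl hndl m' l' s' h]
        simp only [relP]
        ring
      | true =>
        simp only [if_true] at h
        have hsub2 : (PTree.node l' s').leafLabels.Sublist s.leafLabels := subtree_sublist m' s _ h
        have h1 : l'.rightmost ∈ s.leafLabels := by
          apply hsub2.mem
          simp [PTree.leafLabels, rightmost_mem l']
        have h2 : s'.rightmost ∈ s.leafLabels := by
          apply hsub2.mem
          simp [PTree.leafLabels, rightmost_mem s']
        have h1' : l'.rightmost ∉ l.leafLabels := fun hc => hdisj hc h1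
        have h2' : s'.rightmost ∉ l.leafLabels := fun hc => hdisj hc h2
        simp only [go]
        rw [if_neg h1', if_neg h2']
        rw [ihs hnds m' l' s' h]
        simp only [relP]
        ring

lemma go_congr (zt₁ zt₂ : List Bool → ℝ) : ∀ (t : PTree r) (p₁ p₂ : List Bool) (X ρ : ℝ),
    (∀ m : List Bool, m ≠ [] → zt₁ (p₁ ++ m) = zt₂ (p₂ ++ m)) →
    ∀ i, go zt₁ t p₁ X ρ i = go zt₂ t p₂ X ρ i := by
  intro t
  induction t with
  | leaf j => intro p₁ p₂ X ρ _ i; simp [go]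
  | node l s ihl ihs =>
    intro p₁ p₂ X ρ hag i
    simp only [go]
    have h0 : zt₁ (p₁ ++ [false]) = zt₂ (p₂ ++ [false]) := hag [false] (by simp)
    have h1 : zt₁ (p₁ ++ [true]) = zt₂ (p₂ ++ [true]) := hag [true] (by simp)
    by_cases hi : i ∈ l.leafLabels
    · rw [if_pos hi, if_pos hi, h0]
      exact ihl _ _ _ _ (fun m hm => by
        rw [List.append_assoc, List.append_assoc]
        exact hag ([false] ++ m) (by simp)) i
    · rw [if_neg hi, if_neg hi, h1]
      exact ihs _ _ _ _ (fun m hm => by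
        rw [List.append_assoc, List.append_assoc]
        exact hag ([true] ++ m) (by simp)) i

/-! ### chart identities -/

section Chart

variable {T : PTree r} {zs : Fin r → ℂ} {X₀ : ℂ} {zc : List Bool → ℂ} {g : List Bool} {ε : ℝ}

lemma xAt_eq {m : List Bool} {t' : PTree r} (h : T.subtreeAt m = some t') :
    PTree.xAt T zs m = PTree.xval zs t' := by
  simp [PTree.xAt, h]

lemma relP_ne_zero (hzc : ∀ m, T.IsEdge m → zc m ≠ 0) :
    ∀ m, T.IsVertex m → relP zc [] m ≠ 0 := by
  intro m
  induction m using List.reverseRecOn with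
  | nil => intro _; simp [relP]
  | append_singleton m b ih =>
    intro hv
    rw [relP_snoc]
    simp only [List.nil_append]
    exact mul_ne_zero (ih (isVertex_prefix hv)) (hzc _ ⟨by simp, hv⟩)

lemma xAt_of_psi (hX0 : X₀ ≠ 0) (hzc : ∀ m, T.IsEdge m → zc m ≠ 0)
    (h2 : PTree.xval zs T = X₀)
    (h3 : ∀ m, T.IsEdge m → PTree.zetaAt T zs m = zc m) :
    ∀ m, T.IsVertex m → PTree.xAt T zs m = X₀ * relP zc [] m := by
  intro m
  induction m using List.reverseRecOn with
  | nil =>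
    intro _
    have h0 : T.subtreeAt [] = some T := by cases T <;> rfl
    rw [xAt_eq h0, h2]
    simp [relP]
  | append_singleton m b ih =>
    intro hv
    have hedge : T.IsEdge (m ++ [b]) := ⟨by simp, hv⟩
    have hvm : T.IsVertex m := isVertex_prefix hv
    have hz := h3 _ hedge
    unfold PTree.zetaAt at hz
    rw [List.dropLast_concat] at hz
    have hm : PTree.xAt T zs m = X₀ * relP zc [] m := ih hvm
    have hmne : PTree.xAt T zs m ≠ 0 := by
      rw [hm]; exact mul_ne_zero hX0 (relP_ne_zero hzc m hvm)
    rw [div_eq_iff hmne] at hz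
    rw [hz, hm, relP_snoc]
    simp only [List.nil_append]
    ring

lemma zeta_of_xAt (hX0 : X₀ ≠ 0) (hzc : ∀ m, T.IsEdge m → zc m ≠ 0)
    (Hx : ∀ m, T.IsVertex m → PTree.xAt T zs m = X₀ * relP zc [] m) :
    ∀ m, T.IsEdge m → PTree.zetaAt T zs m = zc m := by
  intro m hm
  obtain ⟨hne, hv⟩ := hm
  have hm' : m.dropLast ++ [m.getLast hne] = m := List.dropLast_append_getLast hne
  have hvd : T.IsVertex m.dropLast :=
    isVertex_prefix (a := m.dropLast) (b := [m.getLast hne]) (by rw [hm']; exact hv)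
  have hsplit : relP zc [] m = relP zc [] m.dropLast * zc m := by
    conv_lhs => rw [← hm']
    rw [relP_snoc]
    simp only [List.nil_append, hm']
  unfold PTree.zetaAt
  rw [Hx m hv, Hx _ hvd, hsplit]
  have h1 : X₀ * relP zc [] m.dropLast ≠ 0 := mul_ne_zero hX0 (relP_ne_zero hzc _ hvd)
  field_simp
  exact mul_div_cancel_left₀ _ (relP_ne_zero hzc _ hvd)

lemma Nle (HT : T.IsTree) {m : List Bool} {t : PTree r} (h : T.subtreeAt m = some t) :
    (Ncount t : ℝ) ≤ (r : ℝ) := by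
  have hs := subtree_sublist m T t h
  have hlen := hs.length_le
  rw [HT.2, labels_length] at hlen
  exact_mod_cast Nat.cast_le.mpr (by omega : Ncount t ≤ r)

lemma combineKeyA {cab ε a b Sl Ss : ℝ} (hcab0 : 0 < cab) (hε0 : 0 < ε) (hε1 : ε ≤ 1/400)
    (ha0 : 0 ≤ a) (hb0 : 0 ≤ b) (har : ε*a ≤ 1/100) (hbr : ε*b ≤ 1/100)
    (h1 : Sl + Ss ≤ cab * ((3/4) * (1 + 2*ε*a) + ε * (7/4 + 4*ε*a)) + cab * (ε * (1 + 2*ε*b))) :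
    (Sl + Ss < cab) ∧ (cab + Sl + Ss ≤ cab * (7/4 + 4*ε*(a + b + 1))) := by
  have hK : (3/4) * (1 + 2*ε*a) + ε * (7/4 + 4*ε*a) + ε * (1 + 2*ε*b) ≤ 99/100 := by
    nlinarith [mul_le_mul_of_nonneg_left har hε0.le, mul_le_mul_of_nonneg_left hbr hε0.le,
      mul_nonneg hε0.le ha0, mul_nonneg hε0.le hb0]
  have hK2 : (3/4) * (1 + 2*ε*a) + ε * (7/4 + 4*ε*a) + ε * (1 + 2*ε*b) ≤ 3/4 + 4*ε*(a+b+1) := by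
    nlinarith [mul_le_mul_of_nonneg_left har hε0.le, mul_le_mul_of_nonneg_left hbr hε0.le,
      mul_nonneg hε0.le ha0, mul_nonneg hε0.le hb0]
  constructor
  · nlinarith [mul_le_mul_of_nonneg_left hK hcab0.le]
  · nlinarith [mul_le_mul_of_nonneg_left hK2 hcab0.le]

lemma combineKeyB {cab ε a b Sl Ss : ℝ} (hcab0 : 0 < cab) (hε0 : 0 < ε) (hε1 : ε ≤ 1/400)
    (ha0 : 0 ≤ a) (hb0 : 0 ≤ b) (har : ε*a ≤ 1/100) (hbr : ε*b ≤ 1/100)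
    (h1 : Sl ≤ cab * (ε * (1 + 2*ε*a))) (h2 : Ss ≤ cab * (ε * (1 + 2*ε*b))) :
    (Sl + Ss < cab) ∧ (cab + Sl + Ss ≤ cab * (1 + 2*ε*(a + b + 1)))
      ∧ (cab + Sl + Ss ≤ cab * (7/4 + 4*ε*(a + b + 1))) := by
  have hK : ε * (1 + 2*ε*a) + ε * (1 + 2*ε*b) ≤ 1/2 := by
    nlinarith [mul_le_mul_of_nonneg_left har hε0.le, mul_le_mul_of_nonneg_left hbr hε0.le]
  have hK2 : ε * (1 + 2*ε*a) + ε * (1 + 2*ε*b) ≤ 2*ε*(a+b+1) := by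
    nlinarith [mul_nonneg hε0.le ha0, mul_nonneg hε0.le hb0,
      mul_le_mul_of_nonneg_left har hε0.le, mul_le_mul_of_nonneg_left hbr hε0.le]
  refine ⟨?_, ?_, ?_⟩
  · nlinarith [mul_le_mul_of_nonneg_left hK hcab0.le]
  · nlinarith [mul_le_mul_of_nonneg_left hK2 hcab0.le]
  · have h3 : 2*ε*(a+b+1) ≤ 3/4 + 4*ε*(a+b+1) := by
      nlinarith [mul_nonneg hε0.le ha0, mul_nonneg hε0.le hb0]
    nlinarith [mul_le_mul_of_nonneg_left hK2 hcab0.le, mul_le_mul_of_nonneg_left h3 hcab0.le]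

set_option maxHeartbeats 1000000 in
lemma sumbound (HT : T.IsTree) (hX0 : X₀ ≠ 0) (hzc : ∀ m, T.IsEdge m → zc m ≠ 0)
    (Hx : ∀ m, T.IsVertex m → PTree.xAt T zs m = X₀ * relP zc [] m)
    (hε0 : 0 < ε) (hε1 : ε ≤ 1/400) (hεr : ε * ((r:ℝ)+1) ≤ 1/100)
    (Hb : ∀ m, T.IsEdge m → ‖zc m‖ < if m = g then (3/4:ℝ) else ε) :
    ∀ (t : PTree r) (m : List Bool), T.subtreeAt m = some t →
      ((¬(m <+: g ∧ m ≠ g) →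
          xsumA zs t ≤ ‖X₀ * relP zc [] m‖ * (1 + 2*ε*(Ncount t : ℝ)))
      ∧ xsumA zs t ≤ ‖X₀ * relP zc [] m‖ * (7/4 + 4*ε*(Ncount t : ℝ))
      ∧ ∀ l' s' : PTree r, t = PTree.node l' s' →
          xsumA zs l' + xsumA zs s' < ‖X₀ * relP zc [] m‖) := by
  intro t
  induction t with
  | leaf j =>
    intro m h
    have hc : 0 ≤ ‖X₀ * relP zc [] m‖ := norm_nonneg _
    have hN : (0:ℝ) ≤ (Ncount (PTree.leaf j : PTree r) : ℝ) := Nat.cast_nonneg _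
    refine ⟨fun _ => ?_, ?_, fun l' s' heq => by cases heq⟩
    · simp only [xsumA]
      exact mul_nonneg hc (by nlinarith)
    · simp only [xsumA]
      exact mul_nonneg hc (by nlinarith)
  | node l s ihl ihs =>
    intro m h
    have hv : T.IsVertex m := ⟨l, s, h⟩
    have hcab0 : 0 < ‖X₀ * relP zc [] m‖ :=
      norm_pos_iff.mpr (mul_ne_zero hX0 (relP_ne_zero hzc m hv))
    set cab := ‖X₀ * relP zc [] m‖ with hcabdef
    have hxv : ‖PTree.xval zs (.node l s)‖ = cab := by
      rw [← xAt_eq h, Hx m hv]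
    have hc0 : T.subtreeAt (m ++ [false]) = some l := by
      simpa using subtreeAt_child h false
    have hc1 : T.subtreeAt (m ++ [true]) = some s := by
      simpa using subtreeAt_child h true
    have hxsum : xsumA zs (PTree.node l s) = cab + xsumA zs l + xsumA zs s := by
      simp only [xsumA]; rw [hxv]
    have hNnode : ((Ncount (PTree.node l s) : ℕ) : ℝ) = (Ncount l : ℝ) + (Ncount s : ℝ) + 1 := by
      simp only [Ncount]; push_cast; ring
    have cabchild : ∀ b : Bool,
        ‖X₀ * relP zc [] (m ++ [b])‖ = cab * ‖zc (m ++ [b])‖ := by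
      intro b
      rw [relP_snoc]
      simp only [List.nil_append]
      rw [← mul_assoc, norm_mul, hcabdef, norm_mul]
    -- numeric facts about child counts
    have hNl0 : (0:ℝ) ≤ (Ncount l : ℝ) := Nat.cast_nonneg _
    have hNs0 : (0:ℝ) ≤ (Ncount s : ℝ) := Nat.cast_nonneg _
    have hNlr : ε * (Ncount l : ℝ) ≤ 1/100 := by
      have h1 : (Ncount l : ℝ) ≤ (r:ℝ) + 1 := le_trans (Nle HT hc0) (by linarith)
      nlinarith
    have hNsr : ε * (Ncount s : ℝ) ≤ 1/100 := by
      have h1 : (Ncount s : ℝ) ≤ (r:ℝ) + 1 := le_trans (Nle HT hc1) (by linarith)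
      nlinarith
    -- child helper
    have child : ∀ (b : Bool) (c : PTree r), T.subtreeAt (m ++ [b]) = some c →
        (¬((m++[b]) <+: g ∧ (m++[b]) ≠ g) →
          xsumA zs c ≤ ‖X₀ * relP zc [] (m++[b])‖ * (1 + 2*ε*(Ncount c : ℝ))) →
        (xsumA zs c ≤ ‖X₀ * relP zc [] (m++[b])‖ * (7/4 + 4*ε*(Ncount c : ℝ))) →
        ((¬((m++[b]) <+: g ∧ (m++[b]) ≠ g) →
          xsumA zs c ≤ cab * ((if m++[b] = g then (3/4:ℝ) else ε) * (1 + 2*ε*(Ncount c : ℝ))))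
        ∧ xsumA zs c ≤ cab * ((if m++[b] = g then (3/4:ℝ) else ε) * (7/4 + 4*ε*(Ncount c : ℝ)))) := by
      intro b c hcsub h1 h2
      have hNc0 : (0:ℝ) ≤ (Ncount c : ℝ) := Nat.cast_nonneg _
      have hif0 : (0:ℝ) < if m++[b] = g then (3/4:ℝ) else ε := by
        split
        · norm_num
        · exact hε0
      cases c with
      | leaf j =>
        constructor
        · intro _
          simp only [xsumA]
          exact mul_nonneg hcab0.le (mul_nonneg hif0.le (by nlinarith))
        · simp only [xsumA]
          exact mul_nonneg hcab0.le (mul_nonneg hif0.le (by nlinarith))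
      | node c1 c2 =>
        have hedge : T.IsEdge (m++[b]) := ⟨by simp, ⟨c1, c2, hcsub⟩⟩
        have hb := Hb _ hedge
        have hzb0 : 0 ≤ ‖zc (m++[b])‖ := norm_nonneg _
        have hcc := cabchild b
        constructor
        · intro hpa
          have h1' := h1 hpa
          rw [hcc] at h1'
          have hB : (0:ℝ) ≤ 1 + 2*ε*(Ncount (PTree.node c1 c2) : ℝ) := by
            have := (Nat.cast_nonneg (Ncount (PTree.node c1 c2)) : (0:ℝ) ≤ _)
            nlinarith
          calc xsumA zs (PTree.node c1 c2)
              ≤ cab * ‖zc (m++[b])‖ * (1 + 2*ε*(Ncount (PTree.node c1 c2) : ℝ)) := h1'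
            _ ≤ cab * ((if m++[b] = g then (3/4:ℝ) else ε) * (1 + 2*ε*(Ncount (PTree.node c1 c2) : ℝ))) := by
                rw [← mul_assoc]
                apply mul_le_mul_of_nonneg_right _ hB
                exact mul_le_mul_of_nonneg_left hb.le hcab0.le
        · have h2' := h2
          rw [hcc] at h2'
          have hB : (0:ℝ) ≤ 7/4 + 4*ε*(Ncount (PTree.node c1 c2) : ℝ) := by
            have := (Nat.cast_nonneg (Ncount (PTree.node c1 c2)) : (0:ℝ) ≤ _)
            nlinarith
          calc xsumA zs (PTree.node c1 c2)
              ≤ cab * ‖zc (m++[b])‖ * (7/4 + 4*ε*(Ncount (PTree.node c1 c2) : ℝ)) := h2'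
            _ ≤ cab * ((if m++[b] = g then (3/4:ℝ) else ε) * (7/4 + 4*ε*(Ncount (PTree.node c1 c2) : ℝ))) := by
                rw [← mul_assoc]
                apply mul_le_mul_of_nonneg_right _ hB
                exact mul_le_mul_of_nonneg_left hb.le hcab0.le
    have ihl' := ihl (m ++ [false]) hc0
    have ihs' := ihs (m ++ [true]) hc1
    have Hl := child false l hc0 ihl'.1 ihl'.2.1
    have Hs := child true s hc1 ihs'.1 ihs'.2.1
    by_cases hpp : m <+: g ∧ m ≠ g
    · -- g strictly below m : on-path analysis
      obtain ⟨⟨rest, hrest⟩, hne⟩ := hpp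
      cases rest with
      | nil => rw [List.append_nil] at hrest; exact absurd hrest hne
      | cons b₀ rest' =>
        -- off-path child
        have hoffb : ∀ b : Bool, b ≠ b₀ → ¬ ((m ++ [b]) <+: g) := by
          intro b hbb hpre
          obtain ⟨z, hz⟩ := hpre
          rw [← hrest, List.append_assoc] at hz
          have hz2 : [b] ++ z = b₀ :: rest' := List.append_cancel_left hz
          simp only [List.singleton_append, List.cons.injEq] at hz2
          exact hbb hz2.1
        have hponpre : (m ++ [b₀]) <+: g :=
          ⟨rest', by rw [List.append_assoc]; exact hrest⟩
        -- bound for on-path child (either = g or strictly above g)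
        have onbound : ∀ c : PTree r, T.subtreeAt (m ++ [b₀]) = some c →
            ((¬((m++[b₀]) <+: g ∧ (m++[b₀]) ≠ g) →
              xsumA zs c ≤ cab * ((if m++[b₀] = g then (3/4:ℝ) else ε) * (1 + 2*ε*(Ncount c : ℝ))))
            ∧ xsumA zs c ≤ cab * ((if m++[b₀] = g then (3/4:ℝ) else ε) * (7/4 + 4*ε*(Ncount c : ℝ)))) →
            xsumA zs c ≤ cab * ((3/4) * (1 + 2*ε*(Ncount c : ℝ)) + ε * (7/4 + 4*ε*(Ncount c : ℝ))) := by
          intro c hcs hcb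
          have hNc0 : (0:ℝ) ≤ (Ncount c : ℝ) := Nat.cast_nonneg _
          by_cases hg : m ++ [b₀] = g
          · have h1 := hcb.1 (fun hx => hx.2 hg)
            rw [if_pos hg] at h1
            have hx : (0:ℝ) ≤ cab * (ε * (7/4 + 4*ε*(Ncount c : ℝ))) :=
              mul_nonneg hcab0.le (mul_nonneg hε0.le (by nlinarith))
            nlinarith [h1, hx]
          · have h2 := hcb.2
            rw [if_neg hg] at h2
            have hx : (0:ℝ) ≤ cab * ((3/4) * (1 + 2*ε*(Ncount c : ℝ))) :=
              mul_nonneg hcab0.le (mul_nonneg (by norm_num) (by nlinarith))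
            nlinarith [h2, hx]
        -- off-path child bound
        have offbound : ∀ (b : Bool) (c : PTree r), b ≠ b₀ →
            ((¬((m++[b]) <+: g ∧ (m++[b]) ≠ g) →
              xsumA zs c ≤ cab * ((if m++[b] = g then (3/4:ℝ) else ε) * (1 + 2*ε*(Ncount c : ℝ))))
            ∧ xsumA zs c ≤ cab * ((if m++[b] = g then (3/4:ℝ) else ε) * (7/4 + 4*ε*(Ncount c : ℝ)))) →
            xsumA zs c ≤ cab * (ε * (1 + 2*ε*(Ncount c : ℝ))) := by
          intro b c hbb hcb
          have hng : m ++ [b] ≠ g := fun hx => hoffb b hbb (hx ▸ List.prefix_refl _)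
          have h1 := hcb.1 (fun hx => hoffb b hbb hx.1)
          rw [if_neg hng] at h1
          exact h1
        -- per-case bounds, depending on b₀
        have hcomb : (xsumA zs l + xsumA zs s < cab) ∧
            (cab + xsumA zs l + xsumA zs s ≤
              cab * (7/4 + 4*ε*((Ncount l : ℝ) + (Ncount s : ℝ) + 1))) := by
          cases b₀ with
          | false =>
            have h1 := onbound l hc0 Hl
            have h2 := offbound true s (by simp) Hs
            have key := combineKeyA (Sl := xsumA zs l) (Ss := xsumA zs s)
              hcab0 hε0 hε1 hNl0 hNs0 hNlr hNsr (by linarith)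
            exact ⟨key.1, key.2⟩
          | true =>
            have h1 := onbound s hc1 Hs
            have h2 := offbound false l (by simp) Hl
            have key := combineKeyA (Sl := xsumA zs l) (Ss := xsumA zs s)
              hcab0 hε0 hε1 hNs0 hNl0 hNsr hNlr (by linarith)
            refine ⟨key.1, ?_⟩
            have := key.2
            nlinarith [this]
        refine ⟨fun hpa => absurd ⟨⟨b₀ :: rest', hrest⟩, hne⟩ hpa, ?_, ?_⟩
        · rw [hxsum, hNnode]
          exact hcomb.2
        · intro l' s' heq
          injection heq with e1 e2
          subst e1; subst e2
          exact hcomb.1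
    · -- g not strictly below m
      have hoff : ∀ b : Bool, ¬ ((m ++ [b]) <+: g) := by
        intro b hpre
        apply hpp
        refine ⟨(List.prefix_append m [b]).trans hpre, ?_⟩
        intro hmg
        subst hmg
        have := hpre.length_le
        simp at this
      have hng : ∀ b : Bool, m ++ [b] ≠ g := fun b hx => hoff b (hx ▸ List.prefix_refl _)
      have h1 := Hl.1 (fun hx => hoff false hx.1)
      have h2 := Hs.1 (fun hx => hoff true hx.1)
      rw [if_neg (hng false)] at h1
      rw [if_neg (hng true)] at h2
      have key := combineKeyB hcab0 hε0 hε1 hNl0 hNs0 hNlr hNsr h1 h2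
      refine ⟨fun _ => ?_, ?_, ?_⟩
      · rw [hxsum, hNnode]; exact key.2.1
      · rw [hxsum, hNnode]; exact key.2.2
      · intro l' s' heq
        injection heq with e1 e2
        subst e1; subst e2
        exact key.1

lemma good_all (HT : T.IsTree) (hX0 : X₀ ≠ 0) (hzc : ∀ m, T.IsEdge m → zc m ≠ 0)
    (Hx : ∀ m, T.IsVertex m → PTree.xAt T zs m = X₀ * relP zc [] m)
    (hε0 : 0 < ε) (hε1 : ε ≤ 1/400) (hεr : ε * ((r:ℝ)+1) ≤ 1/100)
    (Hb : ∀ m, T.IsEdge m → ‖zc m‖ < if m = g then (3/4:ℝ) else ε) :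
    ∀ (t : PTree r) (m : List Bool), T.subtreeAt m = some t → goodC zs t := by
  intro t
  induction t with
  | leaf j => intro m h; trivial
  | node l s ihl ihs =>
    intro m h
    have hstrict := (sumbound HT hX0 hzc Hx hε0 hε1 hεr Hb (PTree.node l s) m h).2.2 l s rfl
    have hxv : ‖PTree.xval zs (.node l s)‖ = ‖X₀ * relP zc [] m‖ := by
      rw [← xAt_eq h, Hx m ⟨l, s, h⟩]
    refine ⟨by rw [hxv]; exact hstrict, ?_, ?_⟩
    · exact ihl (m ++ [false]) (by simpa using subtreeAt_child h false)
    · exact ihs (m ++ [true]) (by simpa using subtreeAt_child h true)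

lemma goodR_all (HT : T.IsTree) (hX0 : X₀ ≠ 0) (hzc : ∀ m, T.IsEdge m → zc m ≠ 0)
    (Hx : ∀ m, T.IsVertex m → PTree.xAt T zs m = X₀ * relP zc [] m)
    (hε0 : 0 < ε) (hε1 : ε ≤ 1/400) (hεr : ε * ((r:ℝ)+1) ≤ 1/100)
    (Hb : ∀ m, T.IsEdge m → ‖zc m‖ < if m = g then (3/4:ℝ) else ε)
    (Hre : ∀ m, T.IsVertex m → (X₀ * relP zc [] m).re = ‖X₀ * relP zc [] m‖) :
    ∀ (t : PTree r) (m : List Bool), T.subtreeAt m = some t → goodR zs t := by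
  intro t
  induction t with
  | leaf j => intro m h; trivial
  | node l s ihl ihs =>
    intro m h
    have hstrict := (sumbound HT hX0 hzc Hx hε0 hε1 hεr Hb (PTree.node l s) m h).2.2 l s rfl
    have hv : T.IsVertex m := ⟨l, s, h⟩
    have hxv : (PTree.xval zs (.node l s)).re = ‖X₀ * relP zc [] m‖ := by
      rw [← xAt_eq h, Hx m hv]
      exact Hre m hv
    refine ⟨by rw [hxv]; exact hstrict, ?_, ?_⟩
    · exact ihl (m ++ [false]) (by simpa using subtreeAt_child h false)
    · exact ihs (m ++ [true]) (by simpa using subtreeAt_child h true)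

lemma mem_all (HT : T.IsTree) : ∀ i : Fin r, i ∈ T.leafLabels := by
  have hcard : T.leafLabels.toFinset = Finset.univ := by
    apply Finset.eq_univ_of_card
    rw [List.toFinset_card_of_nodup HT.1, HT.2, Fintype.card_fin]
  intro i
  rw [← List.mem_toFinset, hcard]
  exact Finset.mem_univ i

lemma config_of (HT : T.IsTree) (hgood : goodC zs T) : zs ∈ ConfigSpace r := by
  intro i j hij
  have hi := mem_all HT i
  have hj := mem_all HT j
  rcases lt_trichotomy (T.leafLabels.idxOf i) (T.leafLabels.idxOf j) with hlt | heq | hgt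
  · exact ordC zs T hgood HT.1 i j hi hj hlt
  · exact absurd ((List.idxOf_inj hi).mp heq) hij
  · exact (ordC zs T hgood HT.1 j i hj hi hgt).symm

lemma order_of (HT : T.IsTree) (hgood : goodR zs T) :
    zs ∈ ConfigSpace r ∧ SameOrder T zs := by
  have key : ∀ i j : Fin r, T.leafLabels.idxOf i < T.leafLabels.idxOf j →
      (zs j).re < (zs i).re := fun i j h =>
    ordR zs T hgood HT.1 i j (mem_all HT i) (mem_all HT j) h
  constructor
  · intro i j hij
    rcases lt_trichotomy (T.leafLabels.idxOf i) (T.leafLabels.idxOf j) with hlt | heq | hgt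
    · intro hc
      have := key i j hlt
      rw [hc] at this
      exact lt_irrefl _ this
    · exact absurd ((List.idxOf_inj (mem_all HT i)).mp heq) hij
    · intro hc
      have := key j i hgt
      rw [hc] at this
      exact lt_irrefl _ this
  · intro i j hij
    constructor
    · intro hre
      rcases lt_trichotomy (T.leafLabels.idxOf j) (T.leafLabels.idxOf i) with hlt | heq | hgt
      · exact hlt
      · exact absurd ((List.idxOf_inj (mem_all HT j)).mp heq) hij.symm
      · exact absurd (key i j hgt) (by linarith)
    · exact fun h => key j i h

end Chart

/-! ### the admissible radii -/

def epsr (r : ℕ) : ℝ := 1/(100*((r:ℝ)+1))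

lemma epsr_pos (r : ℕ) : 0 < epsr r := by
  unfold epsr
  positivity

lemma epsr_le (hr3 : 3 ≤ r) : epsr r ≤ 1/400 := by
  unfold epsr
  rw [div_le_div_iff₀ (by positivity) (by norm_num)]
  have : (3:ℝ) ≤ (r:ℝ) := by exact_mod_cast hr3
  linarith

lemma epsr_mul (r : ℕ) : epsr r * ((r:ℝ)+1) ≤ 1/100 := by
  unfold epsr
  rw [div_mul_eq_mul_div, one_mul, div_le_div_iff₀ (by positivity) (by norm_num)]
  ring_nf
  nlinarith [Nat.cast_nonneg (α := ℝ) r]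

lemma admissible_of {T : PTree r} (hr3 : 3 ≤ r) (HT : T.IsTree)
    (PT : Fin r → MvPolynomial T.Idx ℂ) (hPsiPhi : T.PsiPhiId PT) (g : List Bool) :
    T.Admissible PT (fun e => if e.1 = g then (3/4:ℝ) else epsr r) := by
  classical
  intro w hx hz
  have hpsi := hPsiPhi w hx (fun e => (hz e).1)
  set zs := T.phiMap PT w with hzs
  have h2 : PTree.xval zs T = w.2.1 := congrArg (fun p => p.2.1) hpsi
  have h3' : (fun e : T.Edge => T.zetaAt zs e.1) = w.2.2 := congrArg (fun p => p.2.2) hpsi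
  set zc : List Bool → ℂ := fun m => if h : T.IsEdge m then w.2.2 ⟨m, h⟩ else 1 with hzcdef
  have hzc : ∀ m, T.IsEdge m → zc m ≠ 0 := by
    intro m hm
    simp only [hzcdef, dif_pos hm]
    exact (hz ⟨m, hm⟩).1
  have h3 : ∀ m, T.IsEdge m → T.zetaAt zs m = zc m := by
    intro m hm
    simp only [hzcdef, dif_pos hm]
    exact congrFun h3' ⟨m, hm⟩
  have Hx := xAt_of_psi hx hzc h2 h3
  have Hb : ∀ m, T.IsEdge m → ‖zc m‖ < if m = g then (3/4:ℝ) else epsr r := by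
    intro m hm
    simp only [hzcdef, dif_pos hm]
    exact (hz ⟨m, hm⟩).2
  have hgood := good_all HT hx hzc Hx (epsr_pos r) (epsr_le hr3) (epsr_mul r) (g := g) Hb T []
    (by cases T <;> rfl)
  exact config_of HT hgood

lemma mem_UA_of {T : PTree r} (hr3 : 3 ≤ r) (HT : T.IsTree)
    (PT : Fin r → MvPolynomial T.Idx ℂ) (hPhiPsi : T.PhiPsiId PT) (hPsiPhi : T.PsiPhiId PT)
    (g : List Bool) {zs : Fin r → ℂ} (hconf : zs ∈ ConfigSpace r)
    (hψ : T.psi zs ∈ T.cutRegion (fun e => if e.1 = g then (3/4:ℝ) else epsr r)) :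
    zs ∈ T.UA PT := by
  refine Set.mem_iUnion.mpr ⟨(fun e => if e.1 = g then (3/4:ℝ) else epsr r), ?_⟩
  refine Set.mem_iUnion.mpr ⟨⟨?_, admissible_of hr3 HT PT hPsiPhi g⟩, ?_⟩
  · intro e
    dsimp only
    split
    · norm_num
    · exact epsr_pos r
  · exact ⟨T.psi zs, hψ, hPhiPsi zs hconf⟩


/-! ### the two weight functions and the key equality under rotation -/

lemma ne_of_len {α : Type*} {x y : List α} (h : x.length ≠ y.length) : x ≠ y :=
  fun hc => h (congrArg _ hc)

section Rotate

variable (e₀ : List Bool) (δ : ℝ)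

def ztA : List Bool → ℝ := fun m => if m = e₀ ++ [true] then 2/3 else δ

def ztA' : List Bool → ℝ := fun m =>
  if m = e₀ then (2/3)*δ
  else if m = e₀ ++ [false] then 1/2
  else if m = e₀ ++ [false, false] then 3*δ
  else if m = e₀ ++ [false, true] then 2*δ
  else δ

lemma app_ne {x y : List Bool} (h : x ≠ y) : e₀ ++ x ≠ e₀ ++ y :=
  fun hc => h (List.append_cancel_left hc)

lemma app_ne_nil {x : List Bool} (h : x ≠ []) : e₀ ++ x ≠ e₀ := by
  intro hc
  apply h
  have h2 : e₀ ++ x = e₀ ++ [] := by simpa using hc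
  exact List.append_cancel_left h2

lemma ztA_app {u : List Bool} (h : u ≠ [true]) : ztA e₀ δ (e₀ ++ u) = δ :=
  if_neg (app_ne e₀ h)

lemma ztA'_app {u : List Bool} (h0 : u ≠ []) (h1 : u ≠ [false]) (h2 : u ≠ [false, false])
    (h3 : u ≠ [false, true]) : ztA' e₀ δ (e₀ ++ u) = δ := by
  unfold ztA'
  rw [if_neg (app_ne_nil e₀ h0), if_neg (app_ne e₀ h1), if_neg (app_ne e₀ h2),
    if_neg (app_ne e₀ h3)]

lemma ztA_f : ztA e₀ δ (e₀ ++ [true]) = 2/3 := if_pos rfl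
lemma ztA'_e : ztA' e₀ δ e₀ = (2/3)*δ := if_pos rfl

lemma ztA'_l : ztA' e₀ δ (e₀ ++ [false]) = 1/2 := by
  unfold ztA'
  rw [if_neg (app_ne_nil e₀ (by simp)), if_pos rfl]

lemma ztA'_ll : ztA' e₀ δ (e₀ ++ [false, false]) = 3*δ := by
  unfold ztA'
  rw [if_neg (app_ne_nil e₀ (by simp)), if_neg (app_ne e₀ (by simp)), if_pos rfl]

lemma ztA'_lt : ztA' e₀ δ (e₀ ++ [false, true]) = 2*δ := by
  unfold ztA'
  rw [if_neg (app_ne_nil e₀ (by simp)), if_neg (app_ne e₀ (by simp)),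
    if_neg (app_ne e₀ (by simp)), if_pos rfl]

lemma zt_short {m : List Bool} (hlen : m.length < e₀.length) :
    ztA e₀ δ m = δ ∧ ztA' e₀ δ m = δ := by
  constructor
  · exact if_neg (ne_of_len (by simp; omega))
  · unfold ztA'
    rw [if_neg (ne_of_len (by omega)), if_neg (ne_of_len (by simp; omega)),
      if_neg (ne_of_len (by simp; omega)), if_neg (ne_of_len (by simp; omega))]

lemma zt_offpath {u : List Bool} (h : ¬ e₀ <+: u) : ztA e₀ δ u = δ ∧ ztA' e₀ δ u = δ := by
  constructor
  · refine if_neg (fun hc => h ?_)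
    rw [hc]; exact List.prefix_append e₀ [true]
  · unfold ztA'
    rw [if_neg (fun hc => h (by rw [hc])), if_neg (fun hc => h (by rw [hc]; exact List.prefix_append _ _)),
      if_neg (fun hc => h (by rw [hc]; exact List.prefix_append _ _)),
      if_neg (fun hc => h (by rw [hc]; exact List.prefix_append _ _))]

lemma go_node (zt : List Bool → ℝ) (l s : PTree r) (p : List Bool) (X ρ : ℝ) (i : Fin r) :
    go zt (.node l s) p X ρ i =
      if i ∈ l.leafLabels then go zt l (p ++ [false]) (zt (p ++ [false]) * X) (ρ + X) i
      else go zt s (p ++ [true]) (zt (p ++ [true]) * X) ρ i := rfl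

lemma go_congr' (zt₁ zt₂ : List Bool → ℝ) (t : PTree r) (p₁ p₂ : List Bool) {X₁ X₂ ρ₁ ρ₂ : ℝ}
    (hX : X₁ = X₂) (hρ : ρ₁ = ρ₂)
    (hag : ∀ m : List Bool, m ≠ [] → zt₁ (p₁ ++ m) = zt₂ (p₂ ++ m)) (i : Fin r) :
    go zt₁ t p₁ X₁ ρ₁ i = go zt₂ t p₂ X₂ ρ₂ i := by
  subst hX; subst hρ; exact go_congr zt₁ zt₂ t p₁ p₂ _ _ hag i

lemma go_base (A₁ A₂ A₃ : PTree r) (X ρ : ℝ) (i : Fin r) :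
    go (ztA e₀ δ) (.node A₁ (.node A₂ A₃)) e₀ X ρ i
      = go (ztA' e₀ δ) (.node (.node A₁ A₂) A₃) e₀ ((2/3) * X) ρ i := by
  simp only [go_node]
  simp only [List.append_assoc, List.cons_append, List.nil_append]
  by_cases h1 : i ∈ A₁.leafLabels
  · have hm : i ∈ (PTree.node A₁ A₂).leafLabels := by
      simp [PTree.leafLabels, h1]
    rw [if_pos h1, if_pos hm, if_pos h1]
    rw [ztA_app e₀ δ (by simp), ztA'_l, ztA'_ll]
    refine go_congr' _ _ A₁ (e₀ ++ [false]) (e₀ ++ [false, false]) (by ring) (by ring) ?_ i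
    intro m hm'
    simp only [List.append_assoc, List.cons_append, List.nil_append]
    rw [ztA_app e₀ δ (by simp), ztA'_app e₀ δ (by simp) (by simp)
      (fun hc => hm' (by simpa using hc)) (by simp)]
  · rw [if_neg h1]
    by_cases h2 : i ∈ A₂.leafLabels
    · have hm : i ∈ (PTree.node A₁ A₂).leafLabels := by
        simp [PTree.leafLabels, h2]
      rw [if_pos h2, if_pos hm, if_neg h1]
      rw [ztA_f, ztA_app e₀ δ (by simp), ztA'_l, ztA'_lt]
      refine go_congr' _ _ A₂ (e₀ ++ [true, false]) (e₀ ++ [false, true]) (by ring) (by ring) ?_ i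
      intro m hm'
      simp only [List.append_assoc, List.cons_append, List.nil_append]
      rw [ztA_app e₀ δ (by simp), ztA'_app e₀ δ (by simp) (by simp) (by simp)
        (fun hc => hm' (by simpa using hc))]
    · have hm : i ∉ (PTree.node A₁ A₂).leafLabels := by
        simp [PTree.leafLabels, h1, h2]
      rw [if_neg h2, if_neg hm]
      rw [ztA_f, ztA_app e₀ δ (by simp), ztA'_app e₀ δ (by simp) (by simp) (by simp) (by simp)]
      refine go_congr' _ _ A₃ (e₀ ++ [true, true]) (e₀ ++ [true]) (by ring) (by ring) ?_ i
      intro m hm'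
      simp only [List.append_assoc, List.cons_append, List.nil_append]
      rw [ztA_app e₀ δ (by simp), ztA'_app e₀ δ (by simp) (by simp) (by simp) (by simp)]

lemma go_step (A₁ A₂ A₃ : PTree r) :
    ∀ (t : PTree r) (m p : List Bool) (X ρ : ℝ), t.leafLabels.Nodup →
      t.subtreeAt m = some (.node A₁ (.node A₂ A₃)) → p ++ m = e₀ → m ≠ [] →
      ∀ i, go (ztA e₀ δ) t p X ρ i
        = go (ztA' e₀ δ) (t.replaceAt m (.node (.node A₁ A₂) A₃)) p X ρ i := by
  intro t
  induction t with
  | leaf j =>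
    intro m p X ρ _ h _ hm
    cases m with
    | nil => exact absurd rfl hm
    | cons b m' => simp [PTree.subtreeAt] at h
  | node l s ihl ihs =>
    intro m p X ρ hnd h hpm hm
    obtain ⟨hndl, hnds, hdisj⟩ := nodup_node hnd
    cases m with
    | nil => exact absurd rfl hm
    | cons b m' =>
      simp only [PTree.subtreeAt] at h
      have hpm' : (p ++ [b]) ++ m' = e₀ := by rw [← hpm]; simp
      -- off-path helper
      have hoff : ∀ (c : Bool), c ≠ b → ∀ u : List Bool, ¬ e₀ <+: ((p ++ [c]) ++ u) := by
        intro c hc u hpre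
        obtain ⟨z, hz⟩ := hpre
        rw [← hpm] at hz
        simp only [List.append_assoc, List.cons_append, List.nil_append] at hz
        have h2 := List.append_cancel_left hz
        simp only [List.cons.injEq] at h2
        exact hc h2.1.symm
      cases b with
      | false =>
        simp only [Bool.false_eq_true, if_neg, ite_false] at h
        have hlab : (l.replaceAt m' (.node (.node A₁ A₂) A₃)).leafLabels = l.leafLabels :=
          replace_labels m' l _ _ h (by simp [PTree.leafLabels, List.append_assoc])
        intro i
        have hrepl : (PTree.node l s).replaceAt (false :: m') (.node (.node A₁ A₂) A₃)
            = .node (l.replaceAt m' (.node (.node A₁ A₂) A₃)) s := by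
          simp [PTree.replaceAt]
        rw [hrepl, go_node, go_node, hlab]
        by_cases hi : i ∈ l.leafLabels
        · rw [if_pos hi, if_pos hi]
          cases m' with
          | nil =>
            have hl : l = .node A₁ (.node A₂ A₃) := by
              simpa [PTree.subtreeAt] using h
            subst hl
            have he : p ++ [false] = e₀ := by simpa using hpm
            rw [he]
            have hrepl2 : PTree.replaceAt (.node A₁ (.node A₂ A₃)) []
                (.node (.node A₁ A₂) A₃) = (.node (.node A₁ A₂) A₃ : PTree r) := rfl
            rw [hrepl2]
            have hv1 : ztA e₀ δ e₀ = δ := if_neg (ne_of_len (by simp))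
            rw [hv1, ztA'_e]
            rw [show (2/3*δ) * X = (2/3) * (δ * X) by ring]
            exact go_base e₀ δ A₁ A₂ A₃ (δ * X) (ρ + X) i
          | cons b' m'' =>
            have hlen : (p ++ [false]).length < e₀.length := by
              rw [← hpm]; simp
            rw [(zt_short e₀ δ hlen).1, (zt_short e₀ δ hlen).2]
            exact ihl (b' :: m'') (p ++ [false]) _ _ hndl h hpm' (by simp) i
        · rw [if_neg hi, if_neg hi]
          refine go_congr' _ _ s (p ++ [true]) (p ++ [true]) ?_ rfl ?_ i
          · rw [(zt_offpath e₀ δ (by simpa using hoff true (by simp) [])).1,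
              (zt_offpath e₀ δ (by simpa using hoff true (by simp) [])).2]
          · intro u hu
            rw [(zt_offpath e₀ δ (hoff true (by simp) u)).1,
              (zt_offpath e₀ δ (hoff true (by simp) u)).2]
      | true =>
        simp only [if_true, ite_true] at h
        intro i
        have hrepl : (PTree.node l s).replaceAt (true :: m') (.node (.node A₁ A₂) A₃)
            = .node l (s.replaceAt m' (.node (.node A₁ A₂) A₃)) := by
          simp [PTree.replaceAt]
        rw [hrepl, go_node, go_node]
        by_cases hi : i ∈ l.leafLabels
        · rw [if_pos hi, if_pos hi]
          refine go_congr' _ _ l (p ++ [false]) (p ++ [false]) ?_ rfl ?_ i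
          · rw [(zt_offpath e₀ δ (by simpa using hoff false (by simp) [])).1,
              (zt_offpath e₀ δ (by simpa using hoff false (by simp) [])).2]
          · intro u hu
            rw [(zt_offpath e₀ δ (hoff false (by simp) u)).1,
              (zt_offpath e₀ δ (hoff false (by simp) u)).2]
        · rw [if_neg hi, if_neg hi]
          cases m' with
          | nil =>
            have hs : s = .node A₁ (.node A₂ A₃) := by
              simpa [PTree.subtreeAt] using h
            subst hs
            have he : p ++ [true] = e₀ := by simpa using hpm
            rw [he]
            have hrepl2 : PTree.replaceAt (.node A₁ (.node A₂ A₃)) []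
                (.node (.node A₁ A₂) A₃) = (.node (.node A₁ A₂) A₃ : PTree r) := rfl
            rw [hrepl2]
            have hv1 : ztA e₀ δ e₀ = δ := if_neg (ne_of_len (by simp))
            rw [hv1, ztA'_e]
            rw [show (2/3*δ) * X = (2/3) * (δ * X) by ring]
            exact go_base e₀ δ A₁ A₂ A₃ (δ * X) ρ i
          | cons b' m'' =>
            have hlen : (p ++ [true]).length < e₀.length := by
              rw [← hpm]; simp
            rw [(zt_short e₀ δ hlen).1, (zt_short e₀ δ hlen).2]
            exact ihs (b' :: m'') (p ++ [true]) _ _ hnds h hpm' (by simp) i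

end Rotate

/-! ### master lemma -/

lemma master {T : PTree r} (hr3 : 3 ≤ r) (HT : T.IsTree) (zt : List Bool → ℝ) (g : List Bool)
    (hpos : ∀ m, 0 < zt m)
    (hbd : ∀ m, T.IsEdge m → zt m < if m = g then (3/4:ℝ) else epsr r)
    (PT : Fin r → MvPolynomial T.Idx ℂ) (hPhiPsi : T.PhiPsiId PT) (hPsiPhi : T.PsiPhiId PT)
    (q : Fin r → ℂ) (hq : ∀ i, q i = ((go zt T [] 1 0 i : ℝ) : ℂ)) :
    q ∈ ConfigSpace r ∧ SameOrder T q ∧ q ∈ T.UA PT := by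
  set zc : List Bool → ℂ := fun m => ((zt m : ℝ) : ℂ) with hzcdef
  have hzc : ∀ m, T.IsEdge m → zc m ≠ 0 := by
    intro m _
    simp only [hzcdef]
    exact_mod_cast (hpos m).ne'
  have habs : ∀ m, ‖zc m‖ = zt m := by
    intro m
    simp only [hzcdef, Complex.norm_real, Real.norm_eq_abs]
    exact abs_of_pos (hpos m)
  have hrootsub : T.subtreeAt [] = some T := by cases T <;> rfl
  have Hx : ∀ m, T.IsVertex m → PTree.xAt T q m = 1 * relP zc [] m := by
    intro m hv
    obtain ⟨l', s', hm⟩ := hv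
    rw [xAt_eq hm]
    have hgo := go_xval zt T HT.1 m l' s' hm [] 1 0
    have : PTree.xval q (.node l' s') = ((go zt T [] 1 0 l'.rightmost
        - go zt T [] 1 0 s'.rightmost : ℝ) : ℂ) := by
      show q l'.rightmost - q s'.rightmost = _
      rw [hq l'.rightmost, hq s'.rightmost]
      push_cast
      ring
    rw [this, hgo]
    rw [one_mul, one_mul]
    exact relP_coe zt m []
  have Hre : ∀ m, T.IsVertex m →
      ((1:ℂ) * relP zc [] m).re = ‖(1:ℂ) * relP zc [] m‖ := by
    intro m _
    rw [one_mul, ← relP_coe]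
    rw [Complex.ofReal_re, Complex.norm_real, Real.norm_eq_abs]
    exact (abs_of_pos (relP_pos hpos m [])).symm
  have Hb : ∀ m, T.IsEdge m → ‖zc m‖ < if m = g then (3/4:ℝ) else epsr r := by
    intro m hm
    rw [habs]
    exact hbd m hm
  have hgoodR := goodR_all HT one_ne_zero hzc Hx (epsr_pos r) (epsr_le hr3) (epsr_mul r)
    (g := g) Hb Hre T [] hrootsub
  obtain ⟨hconf, horder⟩ := order_of HT hgoodR
  refine ⟨hconf, horder, ?_⟩
  have hxvalT : PTree.xval q T = 1 := by
    have := Hx [] (by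
      cases T with
      | leaf j =>
        exfalso
        have := HT.2
        simp [PTree.leafLabels] at this
        omega
      | node l s => exact ⟨l, s, rfl⟩)
    rw [xAt_eq hrootsub] at this
    simpa [relP] using this
  have hzeta := zeta_of_xAt one_ne_zero hzc Hx
  refine mem_UA_of hr3 HT PT hPhiPsi hPsiPhi g hconf ?_
  constructor
  · show (T.psi q).2.1 ∈ cutPlane
    have : (T.psi q).2.1 = PTree.xval q T := rfl
    rw [this, hxvalT]
    left
    norm_num
  · intro e
    have hz : (T.psi q).2.2 e = zc e.1 := hzeta e.1 e.2
    rw [hz]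
    constructor
    · left
      simp only [hzcdef, Complex.ofReal_re]
      exact hpos e.1
    · rw [habs]
      exact hbd e.1 e.2

end StmtAux


/-- Let `r ≥ 3`, `A ∈ 𝒯_r`, and let `e₀ ∈ E(A)` be an edge of alpha-type, i.e.
the subtree of `A` at `e₀` has the form `A₁(A₂A₃)` (the right child of `d(e₀)`
is not a leaf); let `α_{e₀}A` be the tree obtained from `A` by the rotation at
`e₀`, replacing this subtree by `(A₁A₂)A₃`.  If `Φ_A` and `Φ_{α_{e₀}A}` are
the polynomial maps inverting `Ψ_A` and `Ψ_{α_{e₀}A}`, then there exists a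
point `q ∈ U_A ∩ U_{α_{e₀}A} ∩ X_r(ℝ)` whose order is the same as the order
of `A`. -/
theorem stmt_14 {r : ℕ} (hr : 3 ≤ r) (A : PTree r) (hA : A.IsTree)
    (e₀ : List Bool) (he₀ : A.IsEdge e₀)
    (A₁ A₂ A₃ : PTree r)
    (halpha : A.subtreeAt e₀ = some (.node A₁ (.node A₂ A₃)))
    (A' : PTree r) (hA' : A' = A.replaceAt e₀ (.node (.node A₁ A₂) A₃))
    (P : Fin r → MvPolynomial A.Idx ℂ)
    (hPhiPsi : A.PhiPsiId P) (hPsiPhi : A.PsiPhiId P)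
    (P' : Fin r → MvPolynomial A'.Idx ℂ)
    (hPhiPsi' : A'.PhiPsiId P') (hPsiPhi' : A'.PsiPhiId P') :
    ∃ q : Fin r → ℂ,
      (∀ i, (q i).im = 0) ∧ q ∈ ConfigSpace r ∧
      q ∈ A.UA P ∧ q ∈ A'.UA P' ∧ SameOrder A q := by
  classical
  set δ : ℝ := StmtAux.epsr r / 4 with hδdef
  have hε0 := StmtAux.epsr_pos r
  have hεle := StmtAux.epsr_le hr
  have hδ0 : 0 < δ := by rw [hδdef]; linarith
  -- A' is a tree with the same leaf labels
  have hlabA' : A'.leafLabels = A.leafLabels := by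
    rw [hA']
    exact StmtAux.replace_labels e₀ A _ _ halpha (by simp [PTree.leafLabels, List.append_assoc])
  have hA'tree : A'.IsTree := ⟨hlabA' ▸ hA.1, hlabA' ▸ hA.2⟩
  -- the real point
  set q : Fin r → ℂ := fun i => ((StmtAux.go (StmtAux.ztA e₀ δ) A [] 1 0 i : ℝ) : ℂ) with hqdef
  have hq' : ∀ i, q i = ((StmtAux.go (StmtAux.ztA' e₀ δ) A' [] 1 0 i : ℝ) : ℂ) := by
    intro i
    have hstep := StmtAux.go_step e₀ δ A₁ A₂ A₃ A e₀ [] 1 0 hA.1 halpha (by simp) he₀.1 i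
    rw [hqdef]
    simp only []
    rw [hA']
    exact congrArg (fun x : ℝ => (x : ℂ)) hstep
  -- bounds for the weights
  have hposA : ∀ m, 0 < StmtAux.ztA e₀ δ m := by
    intro m
    unfold StmtAux.ztA
    split_ifs
    · norm_num
    · exact hδ0
  have hbdA : ∀ m, A.IsEdge m →
      StmtAux.ztA e₀ δ m < if m = e₀ ++ [true] then (3/4:ℝ) else StmtAux.epsr r := by
    intro m _
    unfold StmtAux.ztA
    split_ifs
    · norm_num
    · rw [hδdef]; linarith
  have hposA' : ∀ m, 0 < StmtAux.ztA' e₀ δ m := by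
    intro m
    unfold StmtAux.ztA'
    split_ifs <;> nlinarith [hδ0]
  have hbdA' : ∀ m, A'.IsEdge m →
      StmtAux.ztA' e₀ δ m < if m = e₀ ++ [false] then (3/4:ℝ) else StmtAux.epsr r := by
    intro m _
    unfold StmtAux.ztA'
    split_ifs <;> nlinarith [hε0, hεle]
  obtain ⟨hconfA, hordA, hUAA⟩ := StmtAux.master hr hA (StmtAux.ztA e₀ δ) (e₀ ++ [true])
    hposA hbdA P hPhiPsi hPsiPhi q (fun i => rfl)
  obtain ⟨-, -, hUAA'⟩ := StmtAux.master hr hA'tree (StmtAux.ztA' e₀ δ) (e₀ ++ [false])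
    hposA' hbdA' P' hPhiPsi' hPsiPhi' q hq'
  exact ⟨q, fun i => by rw [hqdef]; exact Complex.ofReal_im _, hconfA, hUAA, hUAA', hordA⟩
end
end

section
/- Let r ∈ ℕ, 𝔭 = (p_1,…,p_r) with p_i > 0, q > 0 and N ≥ 1. Let f_0,…,f_{N−1} and g be continuous functions on 𝔻_𝔭^cut × 𝔻_q with values in ℂ such that for each fixed ζ ∈ 𝔻_𝔭^cut the maps ξ ↦ f_k(ζ,ξ) and ξ ↦ g(ζ,ξ) are holomorphic on 𝔻_q; let a_{k,n}(ζ) and b_n(ζ) denote their n-th Taylor coefficients at ξ = 0. Let c_l : 𝔻_𝔭^cut → ℂ (l ∈ ℕ) be continuous functions, and assume the formal power series ψ = Σ_{l≥0} c_l(ζ) ξ^l satisfies the differential equation ((ξ d/dξ)^N + Σ_{k=0}^{N−1} f_k(ζ,ξ) (ξ d/dξ)^k) ψ = g(ζ,ξ) coefficientwise in ξ, i.e. for every ζ ∈ 𝔻_𝔭^cut and every P ∈ ℕ: P^N c_P(ζ) + Σ_{k=0}^{N−1} Σ_{l=0}^{P} a_{k,P−l}(ζ) l^k c_l(ζ) =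 b_P(ζ). Then the series Σ_{l≥0} c_l(ζ) ξ^l converges absolutely and locally uniformly on 𝔻_𝔭^cut × 𝔻_q; more precisely, for every compact K ⊆ 𝔻_𝔭^cut and every 0 < R < q one has Σ_{l≥0} (sup_{ζ∈K} |c_l(ζ)|) R^l < ∞. -/
open Metric Complex Finset


noncomputable section

/-- The cut disc `𝔻_t^cut = 𝔻_t ∩ ℂ^cut`. -/
def cutDisk (t : ℝ) : Set ℂ := {w : ℂ | w ∈ cutPlane ∧ ‖w‖ < t}

/-- The cut polydisc `𝔻_𝔭^cut = ∏_{i} 𝔻_{p_i}^cut ⊆ ℂ^r`. -/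
def polyCutDisk {r : ℕ} (p : Fin r → ℝ) : Set (Fin r → ℂ) :=
  {ζ | ∀ i, ζ i ∈ cutDisk (p i)}

section FrobAux

lemma coeff_bound' {F : ℂ → ℂ} {A : ℕ → ℂ} {q ρ M : ℝ} (hρ : 0 < ρ) (hρq : ρ < q)
    (hd : DifferentiableOn ℂ F (ball (0:ℂ) q))
    (hs : ∀ ξ ∈ ball (0:ℂ) q, HasSum (fun n => A n * ξ ^ n) (F ξ))
    (hM : ∀ ξ : ℂ, ‖ξ‖ = ρ → ‖F ξ‖ ≤ M) :
    ∀ n, ‖A n‖ ≤ M * (1/ρ) ^ n := by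
  have hM0 : 0 ≤ M := le_trans (norm_nonneg _) (hM (ρ : ℂ) (by simp [abs_of_nonneg hρ.le]))
  -- the Cauchy power series
  set ρ' : NNReal := ⟨ρ, hρ.le⟩ with hρ'def
  have hsub : closedBall (0:ℂ) ρ ⊆ ball (0:ℂ) q := closedBall_subset_ball hρq
  have hC : HasFPowerSeriesOnBall F (cauchyPowerSeries F 0 ρ') 0 ρ' :=
    (hd.mono hsub).hasFPowerSeriesOnBall (by exact_mod_cast hρ)
  -- the ofScalars power series
  set P : FormalMultilinearSeries ℂ ℂ ℂ := FormalMultilinearSeries.ofScalars ℂ A with hPdef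
  have hPnorm : ∀ n, ‖P n‖ = ‖A n‖ := fun n => FormalMultilinearSeries.ofScalars_norm ℂ A n
  have hρ'' : ρ < (ρ + q) / 2 ∧ (ρ + q) / 2 < q := ⟨by linarith, by linarith⟩
  have hρ''0 : (0:ℝ) < (ρ + q)/2 := by linarith
  have hrad : (ρ' : ENNReal) ≤ P.radius := by
    have hmem : ((((ρ + q)/2 : ℝ) : ℂ)) ∈ ball (0:ℂ) q := by
      rw [mem_ball_zero_iff, Complex.norm_real, Real.norm_of_nonneg hρ''0.le]
      exact hρ''.2
    have hsum : Summable fun n => ‖A n * ((((ρ + q)/2 : ℝ) : ℂ)) ^ n‖ :=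
      ((hs _ hmem).summable).norm
    have : Summable fun n => ‖P n‖ * ((((ρ+q)/2 : ℝ).toNNReal : ℝ)) ^ n := by
      refine hsum.congr fun n => ?_
      rw [hPnorm, norm_mul, norm_pow, Complex.norm_real, Real.norm_of_nonneg hρ''0.le,
        Real.coe_toNNReal _ hρ''0.le]
    have h1 := P.le_radius_of_summable this
    refine le_trans ?_ h1
    rw [ENNReal.coe_le_coe]
    rw [← NNReal.coe_le_coe, Real.coe_toNNReal _ hρ''0.le]
    exact hρ''.1.le
  have hP : HasFPowerSeriesOnBall F P 0 ρ' := by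
    refine ⟨hrad, by exact_mod_cast hρ, ?_⟩
    intro y hy
    rw [mem_emetric_ball_zero_iff] at hy
    have hyq : y ∈ ball (0:ℂ) q := by
      rw [mem_ball_zero_iff]
      calc ‖y‖ = ((‖y‖₊ : ℝ)) := rfl
        _ < ρ := by exact_mod_cast hy
        _ < q := hρq
    rw [zero_add]
    refine (hs y hyq).congr_fun fun n => ?_
    rw [hPdef, FormalMultilinearSeries.ofScalars_apply_eq, smul_eq_mul]
  have heq : cauchyPowerSeries F 0 ρ' = P :=
    hC.hasFPowerSeriesAt.eq_formalMultilinearSeries hP.hasFPowerSeriesAt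
  intro n
  have hcoe : (ρ' : ℝ) = ρ := rfl
  have hcm : Continuous fun θ : ℝ => F (circleMap 0 ρ θ) := by
    refine hd.continuousOn.comp_continuous (continuous_circleMap 0 ρ) fun θ => ?_
    rw [mem_ball_zero_iff, norm_circleMap_zero, abs_of_pos hρ]
    exact hρq
  have hint : (∫ θ : ℝ in (0)..(2*Real.pi), ‖F (circleMap 0 ρ θ)‖) ≤ (2*Real.pi) * M := by
    have h := intervalIntegral.integral_mono_on Real.two_pi_pos.le
      (hcm.norm.intervalIntegrable _ _) (intervalIntegrable_const (c := M) (μ := MeasureTheory.volume))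
      (fun θ _ => by
        exact hM _ (by rw [norm_circleMap_zero, abs_of_pos hρ]))
    simpa [mul_comm] using h
  have h2 := norm_cauchyPowerSeries_le F 0 ρ n
  calc ‖A n‖ = ‖A n‖ := rfl
    _ = ‖cauchyPowerSeries F 0 ρ n‖ := by
        rw [← hPnorm n, ← heq, hcoe]
    _ ≤ ((2*Real.pi)⁻¹ * ∫ θ : ℝ in (0)..(2*Real.pi), ‖F (circleMap 0 ρ θ)‖) * |ρ|⁻¹ ^ n := h2
    _ ≤ ((2*Real.pi)⁻¹ * ((2*Real.pi) * M)) * |ρ|⁻¹ ^ n := by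
        gcongr
    _ = M * (1/ρ) ^ n := by
        rw [abs_of_pos hρ, inv_mul_cancel_left₀ Real.two_pi_pos.ne', one_div]

lemma frob_arith' {PP Q X S T T' BB AA CC DD : ℝ}
    (hkey : Q * PP * X ≤ BB * T' + AA * Q * (S + X))
    (hS : S ≤ CC * T * DD) (hT' : T' ≤ T)
    (h2 : 2 * AA ≤ PP) (h4 : 4 * AA * DD ≤ PP) (hB : 4 * BB ≤ CC)
    (hPP : 1 ≤ PP) (hQ : 1 ≤ Q) (hX : 0 ≤ X) (hT : 0 < T) (hB0 : 0 ≤ BB)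
    (hA0 : 0 ≤ AA) (hC0 : 0 ≤ CC) (hD0 : 0 ≤ DD) (hS0 : 0 ≤ S) :
    X ≤ CC * T := by
  have hQ0 : (0:ℝ) < Q := lt_of_lt_of_le one_pos hQ
  have hPP0 : (0:ℝ) < PP := lt_of_lt_of_le one_pos hPP
  have e1 : AA * Q * S ≤ AA * Q * (CC * T * DD) :=
    mul_le_mul_of_nonneg_left hS (by positivity)
  have e2 : BB * T' ≤ BB * T := mul_le_mul_of_nonneg_left hT' hB0
  have hkey' : Q * PP * X ≤ BB * T' + (AA * Q * S + AA * Q * X) := by nlinarith [hkey]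
  have t4 : AA * Q * (CC * T * DD) ≤ (PP/4) * Q * (CC * T) := by
    nlinarith [mul_nonneg (mul_nonneg hQ0.le (mul_nonneg hC0 hT.le))
      (by linarith : (0:ℝ) ≤ PP - 4 * AA * DD)]
  have t5 : BB * T ≤ (CC/4) * T := by nlinarith [hT.le]
  have t6 : (CC/4) * T ≤ (CC/4) * T * (PP * Q) := by
    nlinarith [mul_nonneg hC0 hT.le, (by nlinarith : (1:ℝ) ≤ PP * Q)]
  have t7 : AA * Q * X ≤ (PP/2) * Q * X := by
    nlinarith [mul_nonneg (mul_nonneg hQ0.le hX) (by linarith : (0:ℝ) ≤ PP - 2 * AA)]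
  have h9 : ((PP/2) * Q) * X ≤ ((PP/2) * Q) * (CC * T) := by linarith
  exact le_of_mul_le_mul_left h9 (by positivity)

end FrobAux

/-- Frobenius-type convergence lemma.  Let `f_0,…,f_{N−1}` and `g` be
continuous on `𝔻_𝔭^cut × 𝔻_q`, holomorphic in the second variable `ξ ∈ 𝔻_q`
for each fixed `ζ`, with Taylor coefficients `a k n ζ` and `b n ζ` at `ξ = 0`.
Let `c_l : 𝔻_𝔭^cut → ℂ` be continuous and assume the formal power series
`ψ = Σ_l c_l(ζ) ξ^l` satisfies
`((ξ d/dξ)^N + Σ_{k<N} f_k(ζ,ξ)(ξ d/dξ)^k) ψ = g(ζ,ξ)` coefficientwise in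
`ξ`.  Then `Σ_l c_l(ζ) ξ^l` converges absolutely and locally uniformly on
`𝔻_𝔭^cut × 𝔻_q`: for every compact `K ⊆ 𝔻_𝔭^cut` and every `0 < R < q` one
has `Σ_l (sup_{ζ∈K} |c_l(ζ)|)·R^l < ∞`. -/
theorem stmt_15 {r : ℕ} (p : Fin r → ℝ) (hp : ∀ i, 0 < p i)
    (q : ℝ) (hq : 0 < q) (N : ℕ) (hN : 1 ≤ N)
    (f : ℕ → (Fin r → ℂ) → ℂ → ℂ) (g : (Fin r → ℂ) → ℂ → ℂ)
    (hfcont : ∀ k < N, ContinuousOn (fun w : (Fin r → ℂ) × ℂ => f k w.1 w.2)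
      (polyCutDisk p ×ˢ Metric.ball (0 : ℂ) q))
    (hgcont : ContinuousOn (fun w : (Fin r → ℂ) × ℂ => g w.1 w.2)
      (polyCutDisk p ×ˢ Metric.ball (0 : ℂ) q))
    (hfhol : ∀ k < N, ∀ ζ ∈ polyCutDisk p,
      DifferentiableOn ℂ (f k ζ) (Metric.ball (0 : ℂ) q))
    (hghol : ∀ ζ ∈ polyCutDisk p,
      DifferentiableOn ℂ (g ζ) (Metric.ball (0 : ℂ) q))
    (a : ℕ → ℕ → (Fin r → ℂ) → ℂ) (b : ℕ → (Fin r → ℂ) → ℂ)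
    (ha : ∀ k < N, ∀ ζ ∈ polyCutDisk p, ∀ ξ ∈ Metric.ball (0 : ℂ) q,
      HasSum (fun n : ℕ => a k n ζ * ξ ^ n) (f k ζ ξ))
    (hb : ∀ ζ ∈ polyCutDisk p, ∀ ξ ∈ Metric.ball (0 : ℂ) q,
      HasSum (fun n : ℕ => b n ζ * ξ ^ n) (g ζ ξ))
    (c : ℕ → (Fin r → ℂ) → ℂ)
    (hccont : ∀ l, ContinuousOn (c l) (polyCutDisk p))
    (hrec : ∀ ζ ∈ polyCutDisk p, ∀ P : ℕ,
      (P : ℂ) ^ N * c P ζ +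
          ∑ k ∈ Finset.range N, ∑ l ∈ Finset.range (P + 1),
            a k (P - l) ζ * (l : ℂ) ^ k * c l ζ =
        b P ζ) :
    ∀ K : Set (Fin r → ℂ), IsCompact K → K ⊆ polyCutDisk p →
      ∀ R : ℝ, 0 < R → R < q →
        Summable (fun l : ℕ =>
          sSup ((fun ζ => ‖c l ζ‖) '' K) * R ^ l) := by
  intro K hK hKsub R hR hRq
  set m : ℕ → ℝ := fun l => sSup ((fun ζ => ‖c l ζ‖) '' K) with hmdef
  rcases K.eq_empty_or_nonempty with hKe | hKne
  · subst hKe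
    simpa [hmdef, Real.sSup_empty] using summable_zero
  obtain ⟨ζ0, hζ0⟩ := hKne
  have himg : ∀ l, IsCompact ((fun ζ => ‖c l ζ‖) '' K) := fun l =>
    hK.image_of_continuousOn (continuous_norm.comp_continuousOn ((hccont l).mono hKsub))
  have hmle : ∀ l, ∀ ζ ∈ K, ‖c l ζ‖ ≤ m l := fun l ζ hζ =>
    le_csSup (himg l).bddAbove ⟨ζ, hζ, rfl⟩
  have hm0 : ∀ l, 0 ≤ m l := fun l =>
    le_trans (norm_nonneg _) (hmle l ζ0 hζ0)
  have hcsup : ∀ l (x : ℝ), (∀ ζ ∈ K, ‖c l ζ‖ ≤ x) → m l ≤ x := by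
    intro l x h
    refine csSup_le (Set.Nonempty.image _ ⟨ζ0, hζ0⟩) ?_
    rintro _ ⟨ζ, hζ, rfl⟩; exact h ζ hζ
  -- radii
  obtain ⟨ρ, hRρ, hρq⟩ : ∃ ρ, R < ρ ∧ ρ < q := ⟨(R+q)/2, by linarith, by linarith⟩
  obtain ⟨τ, hRτ, hτρ⟩ : ∃ τ, R < τ ∧ τ < ρ := ⟨(R+ρ)/2, by linarith, by linarith⟩
  have hρ0 : 0 < ρ := lt_trans hR hRρ
  have hτ0 : 0 < τ := lt_trans hR hRτ
  -- uniform coefficient bounds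
  have hsphere : Metric.sphere (0:ℂ) ρ ⊆ Metric.ball (0:ℂ) q := fun ξ hξ => by
    rw [mem_sphere_zero_iff_norm] at hξ
    rw [mem_ball_zero_iff, hξ]; exact hρq
  have hSc : IsCompact (K ×ˢ Metric.sphere (0:ℂ) ρ) := hK.prod (isCompact_sphere _ _)
  have hSne : (K ×ˢ Metric.sphere (0:ℂ) ρ).Nonempty := by
    refine ⟨(ζ0, (ρ:ℂ)), hζ0, ?_⟩
    show (ρ:ℂ) ∈ Metric.sphere (0:ℂ) ρ
    rw [mem_sphere_zero_iff_norm, Complex.norm_real, Real.norm_of_nonneg hρ0.le]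
  have hSsub : K ×ˢ Metric.sphere (0:ℂ) ρ ⊆ polyCutDisk p ×ˢ Metric.ball (0:ℂ) q :=
    Set.prod_mono hKsub hsphere
  have hAk : ∀ k : ℕ, ∃ Ak : ℝ, 0 ≤ Ak ∧ (k < N →
      ∀ ζ ∈ K, ∀ n, ‖a k n ζ‖ ≤ Ak * (1/ρ) ^ n) := by
    intro k
    by_cases hk : k < N
    · obtain ⟨x, hxS, hx⟩ := hSc.exists_isMaxOn hSne
        (((hfcont k hk).mono hSsub).norm)
      refine ⟨‖f k x.1 x.2‖, norm_nonneg _, fun _ ζ hζ n => ?_⟩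
      refine coeff_bound' hρ0 hρq (hfhol k hk ζ (hKsub hζ))
        (fun ξ hξ => ha k hk ζ (hKsub hζ) ξ hξ) (fun ξ hξ => ?_) n
      exact isMaxOn_iff.mp hx (ζ, ξ)
        ⟨hζ, by rwa [mem_sphere_zero_iff_norm]⟩
    · exact ⟨0, le_refl _, fun h => absurd h hk⟩
  choose Ak hAk0 hAkb using hAk
  set A : ℝ := ∑ k ∈ Finset.range N, Ak k with hAdef
  have hA0 : 0 ≤ A := Finset.sum_nonneg fun k _ => hAk0 k
  have hA : ∀ k, k < N → ∀ ζ ∈ K, ∀ n, ‖a k n ζ‖ ≤ A * (1/ρ) ^ n := by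
    intro k hk ζ hζ n
    refine le_trans (hAkb k hk ζ hζ n) ?_
    have : Ak k ≤ A := Finset.single_le_sum (fun i _ => hAk0 i) (Finset.mem_range.mpr hk)
    exact mul_le_mul_of_nonneg_right this (by positivity)
  have hB : ∃ B : ℝ, 0 ≤ B ∧ ∀ ζ ∈ K, ∀ n, ‖b n ζ‖ ≤ B * (1/ρ) ^ n := by
    obtain ⟨x, hxS, hx⟩ := hSc.exists_isMaxOn hSne (hgcont.mono hSsub).norm
    refine ⟨‖g x.1 x.2‖, norm_nonneg _, fun ζ hζ n => ?_⟩
    refine coeff_bound' hρ0 hρq (hghol ζ (hKsub hζ))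
      (fun ξ hξ => hb ζ (hKsub hζ) ξ hξ) (fun ξ hξ => ?_) n
    exact isMaxOn_iff.mp hx (ζ, ξ)
      ⟨hζ, by rwa [mem_sphere_zero_iff_norm]⟩
  obtain ⟨B, hB0, hBb⟩ := hB
  -- key recursion inequality
  have hkeym : ∀ P : ℕ, 1 ≤ P → (P:ℝ)^N * m P ≤
      B * (1/ρ)^P + (N:ℝ) * A * (P:ℝ)^(N-1) *
        ∑ l ∈ Finset.range (P+1), (1/ρ)^(P-l) * m l := by
    intro P hP
    have hP0 : (0:ℝ) < (P:ℝ) := by exact_mod_cast hP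
    have hP1 : (1:ℝ) ≤ (P:ℝ) := by exact_mod_cast hP
    have hPNpos : (0:ℝ) < (P:ℝ)^N := pow_pos hP0 N
    set RHS : ℝ := B * (1/ρ)^P + (N:ℝ) * A * (P:ℝ)^(N-1) *
        ∑ l ∈ Finset.range (P+1), (1/ρ)^(P-l) * m l with hRHSdef
    have hterm : ∀ ζ ∈ K, (P:ℝ)^N * ‖c P ζ‖ ≤ RHS := by
      intro ζ hζ
      have heq : (P:ℂ)^N * c P ζ =
          b P ζ - ∑ k ∈ Finset.range N, ∑ l ∈ Finset.range (P + 1),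
            a k (P - l) ζ * (l : ℂ) ^ k * c l ζ :=
        eq_sub_of_add_eq (hrec ζ (hKsub hζ) P)
      calc (P:ℝ)^N * ‖c P ζ‖
          = ‖(P:ℂ)^N * c P ζ‖ := by
            rw [norm_mul, norm_pow, Complex.norm_natCast]
        _ = ‖b P ζ - ∑ k ∈ Finset.range N, ∑ l ∈ Finset.range (P + 1),
              a k (P - l) ζ * (l : ℂ) ^ k * c l ζ‖ := by rw [heq]
        _ ≤ ‖b P ζ‖ + ‖∑ k ∈ Finset.range N, ∑ l ∈ Finset.range (P + 1),
              a k (P - l) ζ * (l : ℂ) ^ k * c l ζ‖ := by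
            exact norm_sub_le (b P ζ)
              (∑ k ∈ Finset.range N, ∑ l ∈ Finset.range (P + 1),
                a k (P - l) ζ * (l : ℂ) ^ k * c l ζ)
        _ ≤ B * (1/ρ)^P + ∑ k ∈ Finset.range N, ∑ l ∈ Finset.range (P + 1),
              ‖a k (P - l) ζ * (l : ℂ) ^ k * c l ζ‖ := by
            refine add_le_add (hBb ζ hζ P) ?_
            exact le_trans (norm_sum_le _ _) (Finset.sum_le_sum fun k _ => norm_sum_le _ _)
        _ ≤ B * (1/ρ)^P + ∑ k ∈ Finset.range N, ∑ l ∈ Finset.range (P + 1),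
              (A * (1/ρ)^(P-l)) * ((P:ℝ)^(N-1) * m l) := by
            refine add_le_add le_rfl (Finset.sum_le_sum fun k hk => Finset.sum_le_sum fun l hl => ?_)
            have hkN : k < N := Finset.mem_range.mp hk
            have hlP : l ≤ P := Nat.lt_succ_iff.mp (Finset.mem_range.mp hl)
            have h1 : ‖a k (P - l) ζ * (l : ℂ) ^ k * c l ζ‖ =
                ‖a k (P - l) ζ‖ * (l:ℝ)^k * ‖c l ζ‖ := by
              rw [norm_mul, norm_mul, norm_pow, Complex.norm_natCast]
            rw [h1]
            have h2 : (l:ℝ)^k ≤ (P:ℝ)^(N-1) := by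
              refine le_trans (pow_le_pow_left₀ (by positivity)
                (show (l:ℝ) ≤ (P:ℝ) by exact_mod_cast hlP) k) ?_
              exact pow_le_pow_right₀ hP1 (Nat.le_sub_one_of_lt hkN)
            have h3 := hA k hkN ζ hζ (P - l)
            have h4 := hmle l ζ hζ
            calc ‖a k (P - l) ζ‖ * (l:ℝ)^k * ‖c l ζ‖
                ≤ (A * (1/ρ)^(P-l)) * (l:ℝ)^k * ‖c l ζ‖ := by
                  refine mul_le_mul_of_nonneg_right (mul_le_mul_of_nonneg_right h3 (by positivity))
                    (norm_nonneg _)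
              _ ≤ (A * (1/ρ)^(P-l)) * (P:ℝ)^(N-1) * m l := by
                  refine mul_le_mul (mul_le_mul_of_nonneg_left h2 (by positivity)) h4
                    (norm_nonneg _) (by positivity)
              _ = (A * (1/ρ)^(P-l)) * ((P:ℝ)^(N-1) * m l) := by ring
        _ = RHS := by
            rw [hRHSdef]
            congr 1
            rw [Finset.sum_const, nsmul_eq_mul, Finset.card_range, Finset.mul_sum, Finset.mul_sum]
            exact Finset.sum_congr rfl fun l _ => by ring
    have hsup := hcsup P (RHS / (P:ℝ)^N) fun ζ hζ => by
      rw [le_div_iff₀ hPNpos]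
      have := hterm ζ hζ; linarith
    have := (le_div_iff₀ hPNpos).mp hsup
    rw [hRHSdef] at this ⊢
    linarith
  -- choose the threshold and constant
  have hD0 : 0 < ρ - τ := by linarith
  set D : ℝ := τ / (ρ - τ) with hDdef
  have hDnn : 0 ≤ D := by positivity
  obtain ⟨P1, hP1⟩ := exists_nat_ge (max (2 * ((N:ℝ) * A)) (4 * ((N:ℝ) * A) * D))
  set P0 : ℕ := P1 + 1 with hP0def
  have hP01 : 1 ≤ P0 := Nat.le_add_left 1 P1
  have hP0a : 2 * ((N:ℝ) * A) ≤ (P0:ℝ) := by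
    refine le_trans (le_trans (le_max_left _ _) hP1) ?_
    exact_mod_cast Nat.le_succ P1
  have hP0b : 4 * ((N:ℝ) * A) * D ≤ (P0:ℝ) := by
    refine le_trans (le_trans (le_max_right _ _) hP1) ?_
    exact_mod_cast Nat.le_succ P1
  set C : ℝ := 4 * B + ∑ l ∈ Finset.range P0, m l * τ^l with hCdef
  have hsum0 : 0 ≤ ∑ l ∈ Finset.range P0, m l * τ^l :=
    Finset.sum_nonneg fun l _ => mul_nonneg (hm0 l) (by positivity)
  have hC0 : 0 ≤ C := by rw [hCdef]; linarith
  have hCB : 4 * B ≤ C := by rw [hCdef]; linarith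
  have hCl : ∀ l, l < P0 → m l * τ^l ≤ C := by
    intro l hl
    have := Finset.single_le_sum (f := fun l => m l * τ^l)
      (fun i _ => mul_nonneg (hm0 i) (by positivity)) (Finset.mem_range.mpr hl)
    rw [hCdef]; linarith
  -- main estimate by strong induction
  have main : ∀ P, m P ≤ C * (1/τ)^P := by
    intro P
    induction P using Nat.strong_induction_on with
    | _ P IH =>
      by_cases hP : P < P0
      · have h1 := hCl P hP
        have h2 : m P = (m P * τ^P) * (1/τ)^P := by
          rw [mul_assoc, ← mul_pow]
          field_simp
          rw [one_pow, mul_one]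
        rw [h2]
        exact mul_le_mul_of_nonneg_right h1 (by positivity)
      · push_neg at hP
        have hP1' : 1 ≤ P := le_trans hP01 hP
        have hPr1 : (1:ℝ) ≤ (P:ℝ) := by exact_mod_cast hP1'
        have hPr0 : (0:ℝ) < (P:ℝ) := by linarith
        have hkey := hkeym P hP1'
        set T : ℝ := (1/τ)^P with hTdef
        have hT0 : 0 < T := by rw [hTdef]; positivity
        set S : ℝ := ∑ l ∈ Finset.range P, (1/ρ)^(P-l) * m l with hSdef
        have hsplit : ∑ l ∈ Finset.range (P+1), (1/ρ)^(P-l) * m l = S + m P := by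
          rw [Finset.sum_range_succ, hSdef, Nat.sub_self, pow_zero, one_mul]
        rw [hsplit] at hkey
        -- geometric bound for S
        have hx1 : (1:ℝ) < ρ/τ := (one_lt_div hτ0).mpr hτρ
        have hstep : ∀ l ∈ Finset.range P, (1/ρ)^(P-l) * m l ≤ (C * (1/ρ)^P) * (ρ/τ)^l := by
          intro l hl
          have hlP : l ≤ P := (Finset.mem_range.mp hl).le
          have h1 : (1/ρ)^P * ρ^l = (1/ρ)^(P-l) :=
            calc (1/ρ)^P * ρ^l = (1/ρ)^((P-l)+l) * ρ^l := by rw [Nat.sub_add_cancel hlP]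
              _ = (1/ρ)^(P-l) := by
                  rw [pow_add, mul_assoc, ← mul_pow, one_div, inv_mul_cancel₀ hρ0.ne',
                    one_pow, mul_one]
          calc (1/ρ)^(P-l) * m l ≤ (1/ρ)^(P-l) * (C * (1/τ)^l) :=
                mul_le_mul_of_nonneg_left (IH l (Finset.mem_range.mp hl)) (by positivity)
            _ = (C * (1/ρ)^P) * (ρ/τ)^l := by
                rw [← h1]; ring
        have hS1 : S ≤ (C * (1/ρ)^P) * ∑ l ∈ Finset.range P, (ρ/τ)^l := by
          rw [hSdef, Finset.mul_sum]
          exact Finset.sum_le_sum hstep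
        have hgeo : ∑ l ∈ Finset.range P, (ρ/τ)^l ≤ (ρ/τ)^P / (ρ/τ - 1) := by
          rw [geom_sum_eq hx1.ne']
          have hden : (0:ℝ) < ρ/τ - 1 := by linarith
          have h1 : (ρ/τ)^P - 1 ≤ (ρ/τ)^P := by linarith
          rw [div_eq_mul_inv, div_eq_mul_inv]
          exact mul_le_mul_of_nonneg_right h1 (inv_nonneg.mpr hden.le)
        have hS : S ≤ C * T * D := by
          refine le_trans hS1 ?_
          refine le_trans (mul_le_mul_of_nonneg_left hgeo (by positivity)) (le_of_eq ?_)
          rw [hTdef, hDdef]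
          have hne : ρ/τ - 1 ≠ 0 := by
            have : 0 < ρ/τ - 1 := by linarith
            exact this.ne'
          have hρne : ρ ≠ 0 := hρ0.ne'
          have hτne : τ ≠ 0 := hτ0.ne'
          field_simp
          ring_nf
          rw [mul_assoc C, ← mul_pow, mul_inv_cancel₀ hρne, one_pow, mul_one]
        have hS0 : 0 ≤ S := by
          rw [hSdef]
          exact Finset.sum_nonneg fun l _ => mul_nonneg (by positivity) (hm0 l)
        -- arithmetic conclusion
        have hρτpow : (1/ρ)^P ≤ T := by
          rw [hTdef]
          exact pow_le_pow_left₀ (by positivity) (one_div_le_one_div_of_le hτ0 hτρ.le) P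
        have hQ1 : (1:ℝ) ≤ (P:ℝ)^(N-1) := one_le_pow₀ hPr1
        have hPN : (P:ℝ)^N = (P:ℝ)^(N-1) * (P:ℝ) := by
          rw [← pow_succ, Nat.sub_add_cancel hN]
        rw [hPN] at hkey
        have h2NA : 2 * ((N:ℝ) * A) ≤ (P:ℝ) := le_trans hP0a (by exact_mod_cast hP)
        have h4NAD : 4 * ((N:ℝ) * A) * D ≤ (P:ℝ) := le_trans hP0b (by exact_mod_cast hP)
        exact frob_arith' hkey hS hρτpow h2NA h4NAD hCB hPr1 hQ1 (hm0 P) hT0 hB0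
          (by positivity) hC0 hDnn hS0
  -- conclude summability
  have hbound : ∀ l, m l * R^l ≤ C * (R/τ)^l := by
    intro l
    calc m l * R^l ≤ (C * (1/τ)^l) * R^l :=
          mul_le_mul_of_nonneg_right (main l) (by positivity)
      _ = C * (R/τ)^l := by
          rw [mul_assoc, ← mul_pow, one_div_mul_eq_div]
  refine Summable.of_nonneg_of_le (fun l => mul_nonneg (hm0 l) (by positivity)) hbound ?_
  have hRτ1 : R/τ < 1 := (div_lt_one hτ0).mpr hRτ
  exact (summable_geometric_of_lt_one (by positivity) hRτ1).mul_left C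
end
end

section
/- Let r ∈ ℕ, 𝔭 = (p_1,…,p_r) with p_i > 0, q > 0, N ≥ 1 and M ∈ ℕ. Let f_0,…,f_{N−1} be continuous functions on 𝔻_𝔭^cut × 𝔻_q, holomorphic in the second variable ξ ∈ 𝔻_q for each fixed ζ, with Taylor coefficients a_{k,n}(ζ) at ξ = 0. Let c_{l,i} : 𝔻_𝔭^cut → ℂ be continuous for l ∈ ℕ and 0 ≤ i ≤ M, and set c_{l,i} = 0 for i > M. Define the operator θ on such arrays by (θc)_{l,i} = l·c_{l,i} + (i+1)·c_{l,i+1} (the action of ξ d/dξ on Σ_{i,l} c_{l,i} ξ^l (log ξ)^i). Assume that the formal series ψ = Σ_{i=0}^M Σ_{l≥0} c_{l,i}(ζ) ξ^l (log ξ)^i satisfies ((ξ d/dξ)^N + Σ_{k=0}^{N−1} f_k (ξ d/dξ)^k) ψ = 0 coefficientwise, i.e. for every ζ ∈ 𝔻_𝔭^cut, every P ∈ ℕ and every i with 0 ≤ i ≤ M: (θ^N c)_{P,i}(ζ) + Σ_{k=0}^{N−1} Σ_{l=0}^{P} a_{k,P−l}(ζ)·(θ^k c)_{l,i}(ζ)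 = 0. Then for each i ∈ {0,…,M} the series Σ_{l≥0} c_{l,i}(ζ) ξ^l converges absolutely and locally uniformly on 𝔻_𝔭^cut × 𝔻_q. -/
noncomputable section

/-- The action of `ξ d/dξ` on the coefficient array of a formal series
`Σ_{i,l} c_{l,i} ξ^l (log ξ)^i`: `(θc)_{l,i} = l·c_{l,i} + (i+1)·c_{l,i+1}`. -/
def thetaOp {r : ℕ} (c : ℕ → ℕ → (Fin r → ℂ) → ℂ) : ℕ → ℕ → (Fin r → ℂ) → ℂ :=
  fun l i ζ => (l : ℂ) * c l i ζ + ((i : ℂ) + 1) * c l (i + 1) ζ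


open Metric in
/-- Cauchy estimate for scalar power series coefficients. -/
lemma coeff_bound_aux {g : ℂ → ℂ} {b : ℕ → ℂ} {q ρ C : ℝ}
    (hq : 0 < q) (hρ : 0 < ρ) (hρq : ρ < q)
    (hg : DifferentiableOn ℂ g (Metric.ball (0 : ℂ) q))
    (hb : ∀ ξ ∈ Metric.ball (0 : ℂ) q, HasSum (fun n : ℕ => b n * ξ ^ n) (g ξ))
    (hC : ∀ ξ : ℂ, ‖ξ‖ = ρ → ‖g ξ‖ ≤ C) :
    ∀ n : ℕ, ‖b n‖ * ρ ^ n ≤ C := by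
  intro n
  set ρ' : ℝ := (ρ + q) / 2 with hρ'def
  have hρ'1 : ρ < ρ' := by rw [hρ'def]; linarith
  have hρ'2 : ρ' < q := by rw [hρ'def]; linarith
  have hρ'pos : 0 < ρ' := lt_trans hρ hρ'1
  lift ρ to NNReal using hρ.le with ρnn hρnn
  have hρpos : (0:ℝ) < ρnn := hρ
  have hsub : Metric.closedBall (0:ℂ) ρnn ⊆ Metric.ball (0:ℂ) q :=
    Metric.closedBall_subset_ball (by exact_mod_cast hρq)
  have h1 : HasFPowerSeriesOnBall g (cauchyPowerSeries g 0 ρnn) 0 ρnn :=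
    (hg.mono hsub).hasFPowerSeriesOnBall (by exact_mod_cast hρpos)
  -- summability of the series at `ρ'` gives a bound on coefficients
  have hmemρ' : (ρ' : ℂ) ∈ Metric.ball (0:ℂ) q := by
    simp only [Metric.mem_ball, dist_zero_right, Complex.norm_real, Real.norm_eq_abs]
    rwa [abs_of_pos hρ'pos]
  have hsummable : Summable (fun nn : ℕ => b nn * (ρ' : ℂ) ^ nn) := (hb (ρ' : ℂ) hmemρ').summable
  have htend := hsummable.tendsto_atTop_zero.norm
  simp only [norm_zero] at htend
  have hbdd : BddAbove (Set.range fun nn : ℕ => ‖b nn * (ρ' : ℂ) ^ nn‖) := htend.bddAbove_range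
  obtain ⟨C₀, hC₀⟩ := hbdd
  have hC₀' : ∀ nn : ℕ, ‖b nn * (ρ' : ℂ) ^ nn‖ ≤ C₀ := fun nn =>
    hC₀ (Set.mem_range_self nn)
  -- the `ofScalars` series of `b`
  set P : FormalMultilinearSeries ℂ ℂ ℂ := FormalMultilinearSeries.ofScalars ℂ b with hPdef
  have hPnorm : ∀ nn : ℕ, ‖P nn‖ = ‖b nn‖ := by
    intro nn
    rw [hPdef]
    show ‖b nn • ContinuousMultilinearMap.mkPiAlgebraFin ℂ nn ℂ‖ = _
    rw [norm_smul (b nn) (ContinuousMultilinearMap.mkPiAlgebraFin ℂ nn ℂ),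
      ContinuousMultilinearMap.norm_mkPiAlgebraFin, mul_one]
  have hrad : (ρnn : ENNReal) ≤ P.radius := by
    refine le_trans ?_ (P.le_radius_of_bound C₀ (r := ρ'.toNNReal) ?_)
    · exact_mod_cast ENNReal.coe_le_coe.mpr (by
        simp only [← NNReal.coe_le_coe, Real.coe_toNNReal _ hρ'pos.le]
        exact hρ'1.le)
    · intro nn
      rw [hPnorm nn, Real.coe_toNNReal _ hρ'pos.le]
      calc ‖b nn‖ * ρ' ^ nn = ‖b nn * (ρ' : ℂ) ^ nn‖ := by
            rw [norm_mul, norm_pow, Complex.norm_real, Real.norm_eq_abs,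
              abs_of_pos hρ'pos]
        _ ≤ C₀ := hC₀' nn
  have h2 : HasFPowerSeriesOnBall g P 0 ρnn := by
    refine ⟨hrad, by exact_mod_cast hρpos, ?_⟩
    intro y hy
    have hyq : y ∈ Metric.ball (0:ℂ) q := by
      simp only [EMetric.mem_ball, edist_zero_right, enorm_eq_nnnorm, ENNReal.coe_lt_coe] at hy
      simp only [Metric.mem_ball, dist_zero_right]
      calc ‖y‖ < ρnn := by exact_mod_cast hy
        _ < q := by exact_mod_cast hρq
    have := hb y hyq
    simp only [zero_add]
    convert this using 1
    · rfl
    funext nn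
    rw [hPdef, FormalMultilinearSeries.ofScalars_apply_eq, smul_eq_mul]
  have heq : P = cauchyPowerSeries g 0 ρnn :=
    h2.hasFPowerSeriesAt.eq_formalMultilinearSeries h1.hasFPowerSeriesAt
  -- Cauchy estimate
  have hb1 := norm_cauchyPowerSeries_le g 0 ρnn n
  rw [← heq, hPnorm n] at hb1
  have hint : (2 * Real.pi)⁻¹ * ∫ θ : ℝ in (0)..2 * Real.pi,
      ‖g (circleMap 0 ρnn θ)‖ ≤ C := by
    have hI : ∫ θ : ℝ in (0)..2 * Real.pi, ‖g (circleMap 0 ρnn θ)‖ ≤ C * (2 * Real.pi) := by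
      calc (∫ θ : ℝ in (0)..2 * Real.pi, ‖g (circleMap 0 ρnn θ)‖)
          ≤ ‖∫ θ : ℝ in (0)..2 * Real.pi, ‖g (circleMap 0 ρnn θ)‖‖ := le_abs_self _
        _ ≤ C * |2 * Real.pi - 0| := by
            refine intervalIntegral.norm_integral_le_of_norm_le_const ?_
            intro θ _
            rw [Real.norm_eq_abs, abs_of_nonneg (norm_nonneg _)]
            refine hC _ ?_
            rw [norm_circleMap_zero, abs_of_pos hρpos]
        _ = C * (2 * Real.pi) := by rw [sub_zero, abs_of_pos Real.two_pi_pos]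
    calc (2 * Real.pi)⁻¹ * ∫ θ : ℝ in (0)..2 * Real.pi, ‖g (circleMap 0 ρnn θ)‖
        ≤ (2 * Real.pi)⁻¹ * (C * (2 * Real.pi)) := by
          exact mul_le_mul_of_nonneg_left hI (by positivity)
      _ = C := by field_simp
  have habs : |(ρnn : ℝ)|⁻¹ ^ n = (ρnn : ℝ)⁻¹ ^ n := by rw [abs_of_pos hρpos]
  rw [habs] at hb1
  have : ‖b n‖ * (ρnn:ℝ) ^ n ≤
      (((2 * Real.pi)⁻¹ * ∫ θ : ℝ in (0)..2 * Real.pi, ‖g (circleMap 0 ρnn θ)‖) *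
        ((ρnn:ℝ)⁻¹ ^ n)) * (ρnn:ℝ) ^ n :=
    mul_le_mul_of_nonneg_right hb1 (by positivity)
  calc ‖b n‖ * (ρnn:ℝ) ^ n
      ≤ (((2 * Real.pi)⁻¹ * ∫ θ : ℝ in (0)..2 * Real.pi, ‖g (circleMap 0 ρnn θ)‖) *
        ((ρnn:ℝ)⁻¹ ^ n)) * (ρnn:ℝ) ^ n := this
    _ = (2 * Real.pi)⁻¹ * ∫ θ : ℝ in (0)..2 * Real.pi, ‖g (circleMap 0 ρnn θ)‖ := by
        rw [mul_assoc, ← mul_pow, inv_mul_cancel₀ hρpos.ne', one_pow, mul_one]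
    _ ≤ C := hint

lemma pow_sub_pow_le_aux {x y : ℝ} (hy : 0 ≤ y) (hxy : y ≤ x) :
    ∀ n : ℕ, x ^ (n + 1) - y ^ (n + 1) ≤ (n + 1 : ℝ) * (x - y) * x ^ n := by
  intro n
  induction n with
  | zero => norm_num
  | succ n ih =>
    have hx : 0 ≤ x := hy.trans hxy
    have hyx : y ^ (n + 1) ≤ x ^ (n + 1) := pow_le_pow_left₀ hy hxy _
    have h1 : x ^ (n + 2) - y ^ (n + 2) = x * (x ^ (n + 1) - y ^ (n + 1)) + (x - y) * y ^ (n + 1) := by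
      ring
    have h2 : x * (x ^ (n + 1) - y ^ (n + 1)) ≤ x * ((n + 1 : ℝ) * (x - y) * x ^ n) :=
      mul_le_mul_of_nonneg_left ih hx
    have h3 : (x - y) * y ^ (n + 1) ≤ (x - y) * x ^ (n + 1) :=
      mul_le_mul_of_nonneg_left hyx (by linarith)
    have h4 : x * ((n + 1 : ℝ) * (x - y) * x ^ n) = (n + 1 : ℝ) * (x - y) * x ^ (n + 1) := by
      ring
    push_cast
    nlinarith [h1, h2, h3, h4]

lemma geom_tail_sum_le {t : ℝ} (ht0 : 0 ≤ t) (ht1 : t < 1) (l : ℕ) :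
    ∑ m ∈ Finset.range l, t ^ (l - m) ≤ (1 - t)⁻¹ := by
  have h1 : ∑ m ∈ Finset.range l, t ^ (l - m) = ∑ j ∈ Finset.range l, t ^ (j + 1) := by
    rw [← Finset.sum_range_reflect]
    refine Finset.sum_congr rfl fun j hj => ?_
    rw [Finset.mem_range] at hj
    congr 1
    omega
  rw [h1]
  calc ∑ j ∈ Finset.range l, t ^ (j + 1) ≤ ∑ j ∈ Finset.range l, t ^ j := by
        refine Finset.sum_le_sum fun j _ => ?_
        exact pow_le_pow_of_le_one ht0 ht1.le (by omega)
    _ ≤ ∑' j : ℕ, t ^ j := Summable.sum_le_tsum _ (fun j _ => pow_nonneg ht0 j)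
        (summable_geometric_of_lt_one ht0 ht1)
    _ = (1 - t)⁻¹ := tsum_geometric_of_lt_one ht0 ht1
section ThetaAux


variable {r : ℕ} {c : ℕ → ℕ → (Fin r → ℂ) → ℂ} {M : ℕ}

lemma theta_vanish (hcM : ∀ l i, M < i → ∀ ζ, c l i ζ = 0) :
    ∀ k l i, M < i → ∀ ζ : Fin r → ℂ, (thetaOp^[k] c) l i ζ = 0 := by
  intro k
  induction k with
  | zero => simpa using hcM
  | succ k ih =>
    intro l i hi ζ
    rw [Function.iterate_succ_apply']
    show (l : ℂ) * (thetaOp^[k] c) l i ζ + ((i : ℂ) + 1) * (thetaOp^[k] c) l (i + 1) ζ = 0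
    rw [ih l i hi ζ, ih l (i + 1) (by omega) ζ, mul_zero, mul_zero, add_zero]

lemma theta_sum_le (hcM : ∀ l i, M < i → ∀ ζ, c l i ζ = 0) :
    ∀ (k l : ℕ) (ζ : Fin r → ℂ),
      ∑ j ∈ Finset.range (M + 1), ‖(thetaOp^[k] c) l j ζ‖ ≤
        ((l : ℝ) + M + 1) ^ k * ∑ j ∈ Finset.range (M + 1), ‖c l j ζ‖ := by
  intro k
  induction k with
  | zero => intro l ζ; simp
  | succ k ih =>
    intro l ζ
    set X : ℕ → ℂ := fun j => (thetaOp^[k] c) l j ζ with hX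
    have hstep : ∀ j, (thetaOp^[k+1] c) l j ζ = (l : ℂ) * X j + ((j : ℂ) + 1) * X (j + 1) := by
      intro j; rw [Function.iterate_succ_apply']; rfl
    have hshift : ∑ j ∈ Finset.range (M + 1), ‖X (j + 1)‖ ≤
        ∑ j ∈ Finset.range (M + 1), ‖X j‖ := by
      have hz : X (M + 1) = 0 := theta_vanish hcM k l (M + 1) (by omega) ζ
      rw [Finset.sum_range_succ, hz, norm_zero, add_zero,
        Finset.sum_range_succ' (fun j => ‖X j‖) M]
      exact le_add_of_nonneg_right (norm_nonneg _)
    calc ∑ j ∈ Finset.range (M + 1), ‖(thetaOp^[k+1] c) l j ζ‖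
        ≤ ∑ j ∈ Finset.range (M + 1), ((l : ℝ) * ‖X j‖ + (M + 1 : ℝ) * ‖X (j + 1)‖) := by
          refine Finset.sum_le_sum fun j hj => ?_
          rw [hstep j]
          refine (norm_add_le _ _).trans ?_
          rw [norm_mul, norm_mul]
          have h1 : ‖((l : ℕ) : ℂ)‖ = (l : ℝ) := by
            rw [Complex.norm_natCast]
          have h2 : ‖((j : ℕ) : ℂ) + 1‖ ≤ (M + 1 : ℝ) := by
            rw [Finset.mem_range] at hj
            rw [show ((j : ℕ) : ℂ) + 1 = ((j + 1 : ℕ) : ℂ) by push_cast; ring,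
              Complex.norm_natCast]
            exact_mod_cast Nat.succ_le_succ (by omega)
          rw [h1]
          exact add_le_add le_rfl (mul_le_mul_of_nonneg_right h2 (norm_nonneg _))
      _ = (l : ℝ) * ∑ j ∈ Finset.range (M + 1), ‖X j‖ +
          (M + 1 : ℝ) * ∑ j ∈ Finset.range (M + 1), ‖X (j + 1)‖ := by
          rw [Finset.sum_add_distrib, Finset.mul_sum, Finset.mul_sum]
      _ ≤ (l : ℝ) * ∑ j ∈ Finset.range (M + 1), ‖X j‖ +
          (M + 1 : ℝ) * ∑ j ∈ Finset.range (M + 1), ‖X j‖ := by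
          exact add_le_add le_rfl (mul_le_mul_of_nonneg_left hshift (by positivity))
      _ = ((l : ℝ) + M + 1) * ∑ j ∈ Finset.range (M + 1), ‖X j‖ := by ring
      _ ≤ ((l : ℝ) + M + 1) * (((l : ℝ) + M + 1) ^ k * ∑ j ∈ Finset.range (M + 1), ‖c l j ζ‖) := by
          refine mul_le_mul_of_nonneg_left (ih l ζ) (by positivity)
      _ = ((l : ℝ) + M + 1) ^ (k + 1) * ∑ j ∈ Finset.range (M + 1), ‖c l j ζ‖ := by ring

lemma theta_lead_le (hcM : ∀ l i, M < i → ∀ ζ, c l i ζ = 0) :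
    ∀ (k l : ℕ), ∀ j ≤ M, ∀ ζ : Fin r → ℂ,
      ‖(thetaOp^[k] c) l j ζ - (l : ℂ) ^ k * c l j ζ‖ ≤
        (((l : ℝ) + M + 1) ^ k - (l : ℝ) ^ k) * ∑ j' ∈ Finset.range (M + 1), ‖c l j' ζ‖ := by
  intro k
  induction k with
  | zero => intro l j hj ζ; simp
  | succ k ih =>
    intro l j hj ζ
    set S : ℝ := ∑ j' ∈ Finset.range (M + 1), ‖c l j' ζ‖ with hS
    have hS0 : 0 ≤ S := Finset.sum_nonneg fun _ _ => norm_nonneg _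
    have hstep : (thetaOp^[k+1] c) l j ζ - (l : ℂ) ^ (k+1) * c l j ζ =
        (l : ℂ) * ((thetaOp^[k] c) l j ζ - (l : ℂ) ^ k * c l j ζ) +
          ((j : ℂ) + 1) * (thetaOp^[k] c) l (j + 1) ζ := by
      rw [Function.iterate_succ_apply']
      show (l : ℂ) * (thetaOp^[k] c) l j ζ + ((j : ℂ) + 1) * (thetaOp^[k] c) l (j+1) ζ
          - (l : ℂ) ^ (k+1) * c l j ζ = _
      ring
    have hnext : ‖(thetaOp^[k] c) l (j + 1) ζ‖ ≤ ((l : ℝ) + M + 1) ^ k * S := by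
      rcases eq_or_lt_of_le hj with heq | hlt
      · rw [theta_vanish hcM k l (j + 1) (by omega) ζ]
        simp only [norm_zero]
        positivity
      · calc ‖(thetaOp^[k] c) l (j + 1) ζ‖
            ≤ ∑ j' ∈ Finset.range (M + 1), ‖(thetaOp^[k] c) l j' ζ‖ :=
              Finset.single_le_sum (f := fun j' => ‖(thetaOp^[k] c) l j' ζ‖)
                (fun j' _ => norm_nonneg _)
                (Finset.mem_range.mpr (by omega : j + 1 < M + 1))
          _ ≤ ((l : ℝ) + M + 1) ^ k * S := theta_sum_le hcM k l ζ
    have hMj : ‖((j : ℕ) : ℂ) + 1‖ ≤ (M + 1 : ℝ) := by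
      rw [show ((j : ℕ) : ℂ) + 1 = ((j + 1 : ℕ) : ℂ) by push_cast; ring, Complex.norm_natCast]
      exact_mod_cast Nat.succ_le_succ hj
    have hlM : (0:ℝ) ≤ (l : ℝ) + M + 1 := by positivity
    have hpow : (l : ℝ) ^ k ≤ ((l : ℝ) + M + 1) ^ k :=
      pow_le_pow_left₀ (by positivity) (by linarith) k
    calc ‖(thetaOp^[k+1] c) l j ζ - (l : ℂ) ^ (k+1) * c l j ζ‖
        ≤ (l : ℝ) * ‖(thetaOp^[k] c) l j ζ - (l : ℂ) ^ k * c l j ζ‖ +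
          (M + 1 : ℝ) * ‖(thetaOp^[k] c) l (j + 1) ζ‖ := by
          rw [hstep]
          refine (norm_add_le _ _).trans ?_
          rw [norm_mul, norm_mul, Complex.norm_natCast]
          gcongr
      _ ≤ (l : ℝ) * ((((l : ℝ) + M + 1) ^ k - (l : ℝ) ^ k) * S) +
          (M + 1 : ℝ) * (((l : ℝ) + M + 1) ^ k * S) := by
          refine add_le_add ?_ ?_
          · exact mul_le_mul_of_nonneg_left (ih l j hj ζ) (Nat.cast_nonneg l)
          · exact mul_le_mul_of_nonneg_left hnext (by positivity)
      _ = (((l : ℝ) + M + 1) * ((l : ℝ) + M + 1) ^ k - (l : ℝ) * (l : ℝ) ^ k) * S := by ring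
      _ = (((l : ℝ) + M + 1) ^ (k+1) - (l : ℝ) ^ (k+1)) * S := by ring

end ThetaAux

/-- Frobenius-type convergence lemma with logarithmic terms.  Let `f_0,…,f_{N−1}`
be continuous on `𝔻_𝔭^cut × 𝔻_q`, holomorphic in `ξ ∈ 𝔻_q` for each fixed `ζ`,
with Taylor coefficients `a k n ζ` at `ξ = 0`.  Let `c_{l,i} : 𝔻_𝔭^cut → ℂ` be
continuous, vanishing for `i > M`, and assume the formal series
`ψ = Σ_{i≤M} Σ_l c_{l,i}(ζ) ξ^l (log ξ)^i` satisfies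
`((ξ d/dξ)^N + Σ_{k<N} f_k (ξ d/dξ)^k) ψ = 0` coefficientwise.  Then for each
`i ∈ {0,…,M}` the series `Σ_l c_{l,i}(ζ) ξ^l` converges absolutely and locally
uniformly on `𝔻_𝔭^cut × 𝔻_q`. -/
theorem stmt_16 {r : ℕ} (p : Fin r → ℝ) (hp : ∀ i, 0 < p i)
    (q : ℝ) (hq : 0 < q) (N : ℕ) (hN : 1 ≤ N) (M : ℕ)
    (f : ℕ → (Fin r → ℂ) → ℂ → ℂ)
    (hfcont : ∀ k < N, ContinuousOn (fun w : (Fin r → ℂ) × ℂ => f k w.1 w.2)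
      (polyCutDisk p ×ˢ Metric.ball (0 : ℂ) q))
    (hfhol : ∀ k < N, ∀ ζ ∈ polyCutDisk p,
      DifferentiableOn ℂ (f k ζ) (Metric.ball (0 : ℂ) q))
    (a : ℕ → ℕ → (Fin r → ℂ) → ℂ)
    (ha : ∀ k < N, ∀ ζ ∈ polyCutDisk p, ∀ ξ ∈ Metric.ball (0 : ℂ) q,
      HasSum (fun n : ℕ => a k n ζ * ξ ^ n) (f k ζ ξ))
    (c : ℕ → ℕ → (Fin r → ℂ) → ℂ)
    (hccont : ∀ l i, ContinuousOn (c l i) (polyCutDisk p))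
    (hcM : ∀ l i, M < i → ∀ ζ, c l i ζ = 0)
    (hrec : ∀ ζ ∈ polyCutDisk p, ∀ P : ℕ, ∀ i ≤ M,
      (thetaOp^[N] c) P i ζ +
          ∑ k ∈ Finset.range N, ∑ l ∈ Finset.range (P + 1),
            a k (P - l) ζ * (thetaOp^[k] c) l i ζ =
        0) :
    ∀ i ≤ M, ∀ K : Set (Fin r → ℂ), IsCompact K → K ⊆ polyCutDisk p →
      ∀ R : ℝ, 0 < R → R < q →
        Summable (fun l : ℕ =>
          sSup ((fun ζ => ‖c l i ζ‖) '' K) * R ^ l) := by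
  intro i hi K hK hKp R hR hRq
  rcases Set.eq_empty_or_nonempty K with hKe | hKne
  · have : (fun l : ℕ => sSup ((fun ζ => ‖c l i ζ‖) '' K) * R ^ l) =
        fun _ => (0 : ℝ) := by
      funext l
      rw [hKe, Set.image_empty, Real.sSup_empty, zero_mul]
    rw [this]
    exact summable_zero
  obtain ⟨N₁, rfl⟩ : ∃ N₁, N = N₁ + 1 := ⟨N - 1, (Nat.succ_pred_eq_of_pos hN).symm⟩
  obtain ⟨ζ₀, hζ₀⟩ := hKne
  set ρ' : ℝ := (2 * R + q) / 3 with hρ'def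
  set ρ : ℝ := (R + 2 * q) / 3 with hρdef
  have hRρ' : R < ρ' := by rw [hρ'def]; linarith
  have hρ'ρ : ρ' < ρ := by rw [hρ'def, hρdef]; linarith
  have hρq : ρ < q := by rw [hρdef]; linarith
  have hρ'pos : 0 < ρ' := lt_trans hR hRρ'
  have hρpos : 0 < ρ := lt_trans hρ'pos hρ'ρ
  -- uniform bound `C` for the `f k` on `K × sphere ρ`
  have hsub : K ×ˢ Metric.sphere (0 : ℂ) ρ ⊆ polyCutDisk p ×ˢ Metric.ball (0 : ℂ) q := by
    rintro ⟨w1, w2⟩ ⟨hw1, hw2⟩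
    refine ⟨hKp hw1, ?_⟩
    rw [Metric.mem_sphere, dist_zero_right] at hw2
    rw [Metric.mem_ball, dist_zero_right, hw2]
    exact hρq
  have hFcont : ContinuousOn
      (fun w : (Fin r → ℂ) × ℂ => ∑ k ∈ Finset.range (N₁ + 1), ‖f k w.1 w.2‖)
      (polyCutDisk p ×ˢ Metric.ball (0 : ℂ) q) := by
    refine continuousOn_finset_sum _ fun k hk => ?_
    exact (hfcont k (Finset.mem_range.mp hk)).norm
  obtain ⟨C₀, hC₀⟩ := (hK.prod (isCompact_sphere (0 : ℂ) ρ)).exists_bound_of_continuousOn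
    (hFcont.mono hsub)
  set C : ℝ := max C₀ 1 with hCdef
  have hC1 : (1 : ℝ) ≤ C := le_max_right _ _
  have hCpos : (0 : ℝ) < C := lt_of_lt_of_le zero_lt_one hC1
  have hfb : ∀ k ≤ N₁, ∀ ζ ∈ K, ∀ ξ : ℂ, ‖ξ‖ = ρ → ‖f k ζ ξ‖ ≤ C := by
    intro k hk ζ hζ ξ hξ
    have hmem : (ζ, ξ) ∈ K ×ˢ Metric.sphere (0 : ℂ) ρ := by
      refine ⟨hζ, ?_⟩
      rw [Metric.mem_sphere, dist_zero_right, ← hξ]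
    have h1 := hC₀ _ hmem
    calc ‖f k ζ ξ‖ ≤ ∑ k' ∈ Finset.range (N₁ + 1), ‖f k' ζ ξ‖ :=
          Finset.single_le_sum (f := fun k' => ‖f k' ζ ξ‖) (fun _ _ => norm_nonneg _)
            (Finset.mem_range.mpr (by omega))
      _ ≤ ‖∑ k' ∈ Finset.range (N₁ + 1), ‖f k' ζ ξ‖‖ := le_abs_self _
      _ ≤ C₀ := h1
      _ ≤ C := le_max_left _ _
  have ha2 : ∀ k ≤ N₁, ∀ ζ ∈ K, ∀ n : ℕ, ‖a k n ζ‖ ≤ C * ρ⁻¹ ^ n := by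
    intro k hk ζ hζ n
    have hb := coeff_bound_aux hq hρpos hρq (hfhol k (by omega) ζ (hKp hζ))
      (ha k (by omega) ζ (hKp hζ)) (fun ξ hξ => hfb k hk ζ hζ ξ hξ) n
    rw [inv_pow, ← div_eq_mul_inv]
    exact (le_div_iff₀ (pow_pos hρpos n)).mpr hb
  -- the quantities `s` and `u`
  set s : ℕ → (Fin r → ℂ) → ℝ := fun l ζ => ∑ j ∈ Finset.range (M + 1), ‖c l j ζ‖ with hsdef
  have hs0 : ∀ l ζ, 0 ≤ s l ζ := fun l ζ => Finset.sum_nonneg fun _ _ => norm_nonneg _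
  have hbddS : ∀ l, BddAbove (s l '' K) := by
    intro l
    refine (hK.image_of_continuousOn ?_).bddAbove
    exact continuousOn_finset_sum _ fun j _ => ((hccont l j).mono hKp).norm
  set u : ℕ → ℝ := fun l => sSup (s l '' K) with hudef
  have hsu : ∀ l, ∀ ζ ∈ K, s l ζ ≤ u l := fun l ζ hζ => le_csSup (hbddS l) ⟨ζ, hζ, rfl⟩
  have hu0 : ∀ l, 0 ≤ u l := fun l => (hs0 l ζ₀).trans (hsu l ζ₀ hζ₀)
  -- main estimate from the recursion
  have hmain : ∀ l : ℕ, ∀ ζ ∈ K,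
      (l : ℝ) ^ (N₁ + 1) * s l ζ ≤
        ((M : ℝ) + 1) * ((((l : ℝ) + M + 1) ^ (N₁ + 1) - (l : ℝ) ^ (N₁ + 1))) * s l ζ +
          ((N₁ : ℝ) + 1) * ∑ m ∈ Finset.range (l + 1),
            C * ρ⁻¹ ^ (l - m) * (((m : ℝ) + M + 1) ^ N₁ * s m ζ) := by
    intro l ζ hζ
    have hζp := hKp hζ
    have hj : ∀ j ∈ Finset.range (M + 1),
        (l : ℝ) ^ (N₁ + 1) * ‖c l j ζ‖ ≤
          ((((l : ℝ) + M + 1) ^ (N₁ + 1) - (l : ℝ) ^ (N₁ + 1))) * s l ζ +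
            ∑ k ∈ Finset.range (N₁ + 1), ∑ m ∈ Finset.range (l + 1),
              C * ρ⁻¹ ^ (l - m) * ‖(thetaOp^[k] c) m j ζ‖ := by
      intro j hjm
      have hjM : j ≤ M := by
        have := Finset.mem_range.mp hjm; omega
      have hr := hrec ζ hζp l j hjM
      have h1 : (l : ℂ) ^ (N₁ + 1) * c l j ζ =
          ((l : ℂ) ^ (N₁ + 1) * c l j ζ - (thetaOp^[N₁ + 1] c) l j ζ) -
            ∑ k ∈ Finset.range (N₁ + 1), ∑ m ∈ Finset.range (l + 1),
              a k (l - m) ζ * (thetaOp^[k] c) m j ζ := by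
        linear_combination hr
      calc (l : ℝ) ^ (N₁ + 1) * ‖c l j ζ‖ = ‖(l : ℂ) ^ (N₁ + 1) * c l j ζ‖ := by
            rw [norm_mul, norm_pow, Complex.norm_natCast]
        _ ≤ ‖(l : ℂ) ^ (N₁ + 1) * c l j ζ - (thetaOp^[N₁ + 1] c) l j ζ‖ +
            ‖∑ k ∈ Finset.range (N₁ + 1), ∑ m ∈ Finset.range (l + 1),
              a k (l - m) ζ * (thetaOp^[k] c) m j ζ‖ := by
            conv_lhs => rw [h1]
            exact norm_sub_le _ _
        _ ≤ ((((l : ℝ) + M + 1) ^ (N₁ + 1) - (l : ℝ) ^ (N₁ + 1))) * s l ζ +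
            ∑ k ∈ Finset.range (N₁ + 1), ∑ m ∈ Finset.range (l + 1),
              C * ρ⁻¹ ^ (l - m) * ‖(thetaOp^[k] c) m j ζ‖ := by
            refine add_le_add ?_ ?_
            · rw [norm_sub_rev]
              exact theta_lead_le hcM (N₁ + 1) l j hjM ζ
            · refine (norm_sum_le _ _).trans ?_
              refine Finset.sum_le_sum fun k hk => ?_
              refine (norm_sum_le _ _).trans ?_
              refine Finset.sum_le_sum fun m hm => ?_
              rw [norm_mul]
              refine mul_le_mul_of_nonneg_right ?_ (norm_nonneg _)
              exact ha2 k (by exact Nat.lt_succ_iff.mp (Finset.mem_range.mp hk)) ζ hζ (l - m)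
    have hsum := Finset.sum_le_sum hj
    rw [← Finset.mul_sum] at hsum
    refine hsum.trans ?_
    rw [Finset.sum_add_distrib, ← Finset.mul_sum]
    refine add_le_add (le_of_eq ?_) ?_
    · rw [Finset.sum_const, Finset.card_range, nsmul_eq_mul]
      push_cast
      ring
    -- swap the `j` sum inside
    rw [Finset.sum_comm]
    calc ∑ k ∈ Finset.range (N₁ + 1), ∑ j ∈ Finset.range (M + 1),
          ∑ m ∈ Finset.range (l + 1), C * ρ⁻¹ ^ (l - m) * ‖(thetaOp^[k] c) m j ζ‖
        = ∑ k ∈ Finset.range (N₁ + 1), ∑ m ∈ Finset.range (l + 1),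
          C * ρ⁻¹ ^ (l - m) * ∑ j ∈ Finset.range (M + 1), ‖(thetaOp^[k] c) m j ζ‖ := by
          refine Finset.sum_congr rfl fun k _ => ?_
          rw [Finset.sum_comm]
          refine Finset.sum_congr rfl fun m _ => ?_
          rw [Finset.mul_sum]
      _ ≤ ∑ k ∈ Finset.range (N₁ + 1), ∑ m ∈ Finset.range (l + 1),
          C * ρ⁻¹ ^ (l - m) * (((m : ℝ) + M + 1) ^ N₁ * s m ζ) := by
          refine Finset.sum_le_sum fun k hk => Finset.sum_le_sum fun m _ => ?_
          refine mul_le_mul_of_nonneg_left ?_ (by positivity)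
          calc ∑ j ∈ Finset.range (M + 1), ‖(thetaOp^[k] c) m j ζ‖
              ≤ ((m : ℝ) + M + 1) ^ k * s m ζ := theta_sum_le hcM k m ζ
            _ ≤ ((m : ℝ) + M + 1) ^ N₁ * s m ζ := by
                refine mul_le_mul_of_nonneg_right ?_ (hs0 m ζ)
                refine pow_le_pow_right₀ (by push_cast; linarith [Nat.cast_nonneg (α := ℝ) m]) ?_
                exact Nat.lt_succ_iff.mp (Finset.mem_range.mp hk)
      _ = ((N₁ : ℝ) + 1) * ∑ m ∈ Finset.range (l + 1),
          C * ρ⁻¹ ^ (l - m) * (((m : ℝ) + M + 1) ^ N₁ * s m ζ) := by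
          rw [Finset.sum_const, Finset.card_range, nsmul_eq_mul]
          push_cast
          ring
  -- constants
  set A : ℝ := ((M : ℝ) + 1) * (((N₁ : ℝ) + 1) * ((M : ℝ) + 1)) + ((N₁ : ℝ) + 1) * C with hAdef
  set E : ℝ := A * ((M : ℝ) + 2) ^ N₁ with hEdef
  set D : ℝ := 2 * (((N₁ : ℝ) + 1) * C) * ((M : ℝ) + 2) ^ N₁ with hDdef
  have hApos : 0 < A := by rw [hAdef]; positivity
  have hEpos : 0 < E := by rw [hEdef]; positivity
  have hDpos : 0 < D := by rw [hDdef]; positivity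
  set L₀ : ℕ := ⌈2 * E⌉₊ + 1 with hL₀def
  have hL₀1 : 1 ≤ L₀ := by omega
  have hrec2 : ∀ l : ℕ, L₀ ≤ l →
      u l * l ≤ D * ∑ m ∈ Finset.range l, ρ⁻¹ ^ (l - m) * u m := by
    intro l hl
    have hl1 : 1 ≤ l := le_trans hL₀1 hl
    have hlR : (1 : ℝ) ≤ (l : ℝ) := by exact_mod_cast hl1
    have hlpos : (0 : ℝ) < l := by linarith
    have h2E : 2 * E ≤ (l : ℝ) := by
      calc 2 * E ≤ (⌈2 * E⌉₊ : ℝ) := Nat.le_ceil _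
        _ ≤ (l : ℝ) := by exact_mod_cast (by omega : ⌈2 * E⌉₊ ≤ l)
    set Z : ℝ := ∑ m ∈ Finset.range l, ρ⁻¹ ^ (l - m) * u m with hZdef
    have hZ0 : 0 ≤ Z := Finset.sum_nonneg fun m _ => mul_nonneg (by positivity) (hu0 m)
    have hpt : ∀ ζ ∈ K, s l ζ * l ≤ D * Z := by
      intro ζ hζ
      have hm := hmain l ζ hζ
      set W : ℝ := ((M : ℝ) + 2) ^ N₁ * (l : ℝ) ^ N₁ with hWdef
      have hW0 : 0 ≤ W := by rw [hWdef]; positivity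
      have hbase : ((l : ℝ) + M + 1) ≤ ((M : ℝ) + 2) * l := by
        nlinarith [Nat.cast_nonneg (α := ℝ) M]
      have hpow1 : ((l : ℝ) + M + 1) ^ N₁ ≤ W := by
        rw [hWdef, ← mul_pow]
        exact pow_le_pow_left₀ (by positivity) hbase N₁
      have hΔ2 : ((l : ℝ) + M + 1) ^ (N₁ + 1) - (l : ℝ) ^ (N₁ + 1) ≤
          (((N₁ : ℝ) + 1) * ((M : ℝ) + 1)) * W := by
        have h0 := pow_sub_pow_le_aux (x := (l : ℝ) + M + 1) (y := (l : ℝ))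
          (Nat.cast_nonneg l) (by linarith [Nat.cast_nonneg (α := ℝ) M]) N₁
        have h0' : ((l : ℝ) + M + 1) ^ (N₁ + 1) - (l : ℝ) ^ (N₁ + 1) ≤
            (((N₁ : ℝ) + 1) * ((M : ℝ) + 1)) * ((l : ℝ) + M + 1) ^ N₁ := by
          calc ((l : ℝ) + M + 1) ^ (N₁ + 1) - (l : ℝ) ^ (N₁ + 1)
              ≤ ((N₁ : ℝ) + 1) * (((l : ℝ) + M + 1) - (l : ℝ)) * ((l : ℝ) + M + 1) ^ N₁ := h0
            _ = (((N₁ : ℝ) + 1) * ((M : ℝ) + 1)) * ((l : ℝ) + M + 1) ^ N₁ := by ring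
        exact h0'.trans (mul_le_mul_of_nonneg_left hpow1 (by positivity))
      have hsplit : ∑ m ∈ Finset.range (l + 1),
            C * ρ⁻¹ ^ (l - m) * (((m : ℝ) + M + 1) ^ N₁ * s m ζ)
          ≤ C * W * Z + C * W * s l ζ := by
        rw [Finset.sum_range_succ]
        refine add_le_add ?_ ?_
        · calc ∑ m ∈ Finset.range l, C * ρ⁻¹ ^ (l - m) * (((m : ℝ) + M + 1) ^ N₁ * s m ζ)
              ≤ ∑ m ∈ Finset.range l, C * W * (ρ⁻¹ ^ (l - m) * u m) := by
                refine Finset.sum_le_sum fun m hm => ?_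
                have hmlt := Finset.mem_range.mp hm
                have hmW : ((m : ℝ) + M + 1) ^ N₁ ≤ W := by
                  refine le_trans ?_ hpow1
                  refine pow_le_pow_left₀ (by positivity) ?_ N₁
                  have : (m : ℝ) ≤ l := by exact_mod_cast hmlt.le
                  linarith
                have h1 : ((m : ℝ) + M + 1) ^ N₁ * s m ζ ≤ W * u m :=
                  mul_le_mul hmW (hsu m ζ hζ) (hs0 m ζ) hW0
                calc C * ρ⁻¹ ^ (l - m) * (((m : ℝ) + M + 1) ^ N₁ * s m ζ)
                    ≤ C * ρ⁻¹ ^ (l - m) * (W * u m) :=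
                      mul_le_mul_of_nonneg_left h1 (by positivity)
                  _ = C * W * (ρ⁻¹ ^ (l - m) * u m) := by ring
            _ = C * W * Z := by rw [hZdef, Finset.mul_sum]
        · rw [Nat.sub_self, pow_zero, mul_one]
          calc C * (((l : ℝ) + M + 1) ^ N₁ * s l ζ) ≤ C * (W * s l ζ) :=
                mul_le_mul_of_nonneg_left
                  (mul_le_mul_of_nonneg_right hpow1 (hs0 l ζ)) hCpos.le
            _ = C * W * s l ζ := by ring
      have hkey : (l : ℝ) ^ (N₁ + 1) * s l ζ ≤ E * ((l : ℝ) ^ N₁ * s l ζ) +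
          (D / 2) * ((l : ℝ) ^ N₁ * Z) := by
        have h1 : ((M : ℝ) + 1) * ((((l : ℝ) + M + 1) ^ (N₁ + 1) - (l : ℝ) ^ (N₁ + 1))) * s l ζ
            ≤ ((M : ℝ) + 1) * ((((N₁ : ℝ) + 1) * ((M : ℝ) + 1)) * W) * s l ζ :=
          mul_le_mul_of_nonneg_right
            (mul_le_mul_of_nonneg_left hΔ2 (by positivity)) (hs0 l ζ)
        have h2 : ((N₁ : ℝ) + 1) * ∑ m ∈ Finset.range (l + 1),
              C * ρ⁻¹ ^ (l - m) * (((m : ℝ) + M + 1) ^ N₁ * s m ζ)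
            ≤ ((N₁ : ℝ) + 1) * (C * W * Z + C * W * s l ζ) :=
          mul_le_mul_of_nonneg_left hsplit (by positivity)
        have h3 := hm.trans (add_le_add h1 h2)
        refine h3.trans (le_of_eq ?_)
        rw [hEdef, hDdef, hAdef, hWdef]
        ring
      have hE2 : E ≤ (l : ℝ) / 2 := by linarith
      have hcanc : (l : ℝ) ^ N₁ * ((l : ℝ) * s l ζ) ≤
          (l : ℝ) ^ N₁ * (((l : ℝ) / 2) * s l ζ + (D / 2) * Z) := by
        have hEterm : E * ((l : ℝ) ^ N₁ * s l ζ) ≤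
            ((l : ℝ) / 2) * ((l : ℝ) ^ N₁ * s l ζ) :=
          mul_le_mul_of_nonneg_right hE2 (by positivity)
        calc (l : ℝ) ^ N₁ * ((l : ℝ) * s l ζ) = (l : ℝ) ^ (N₁ + 1) * s l ζ := by ring
          _ ≤ E * ((l : ℝ) ^ N₁ * s l ζ) + (D / 2) * ((l : ℝ) ^ N₁ * Z) := hkey
          _ ≤ ((l : ℝ) / 2) * ((l : ℝ) ^ N₁ * s l ζ) + (D / 2) * ((l : ℝ) ^ N₁ * Z) :=
            add_le_add hEterm le_rfl
          _ = (l : ℝ) ^ N₁ * (((l : ℝ) / 2) * s l ζ + (D / 2) * Z) := by ring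
      have hlin : (l : ℝ) * s l ζ ≤ ((l : ℝ) / 2) * s l ζ + (D / 2) * Z :=
        le_of_mul_le_mul_left hcanc (pow_pos hlpos N₁)
      linarith
    have hup : u l ≤ D * Z / l := by
      refine csSup_le ⟨s l ζ₀, ζ₀, hζ₀, rfl⟩ ?_
      rintro x ⟨ζ, hζ, rfl⟩
      exact (le_div_iff₀ hlpos).mpr (hpt ζ hζ)
    exact (le_div_iff₀ hlpos).mp hup
  -- geometric comparison
  set t : ℝ := ρ' / ρ with htdef
  have ht0 : 0 < t := by rw [htdef]; positivity
  have ht1 : t < 1 := by rw [htdef]; exact (div_lt_one hρpos).mpr hρ'ρ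
  set v : ℕ → ℝ := fun m => u m * ρ' ^ m with hvdef
  have hv0 : ∀ m, 0 ≤ v m := fun m => mul_nonneg (hu0 m) (by positivity)
  set L₁ : ℕ := max L₀ (⌈D * (1 - t)⁻¹⌉₊ + 1) with hL₁def
  set B : ℝ := 1 + ∑ m ∈ Finset.range L₁, v m with hBdef
  have hB1 : 1 ≤ B := by
    rw [hBdef]
    have : 0 ≤ ∑ m ∈ Finset.range L₁, v m := Finset.sum_nonneg fun m _ => hv0 m
    linarith
  have hB0 : 0 ≤ B := by linarith
  have hvB : ∀ m, m < L₁ → v m ≤ B := by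
    intro m hm
    have h1 : v m ≤ ∑ m' ∈ Finset.range L₁, v m' :=
      Finset.single_le_sum (f := fun m' => v m') (fun _ _ => hv0 _) (Finset.mem_range.mpr hm)
    rw [hBdef]; linarith
  have hall : ∀ l, v l ≤ B := by
    intro l
    induction l using Nat.strong_induction_on with
    | _ l ihl =>
      by_cases hl : l < L₁
      · exact hvB l hl
      · push_neg at hl
        have hlL₀ : L₀ ≤ l := le_trans (le_max_left _ _) hl
        have hl1 : 1 ≤ l := le_trans hL₀1 hlL₀
        have hlpos : (0 : ℝ) < l := by exact_mod_cast hl1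
        have hDl : D * (1 - t)⁻¹ ≤ l := by
          have h1 : ⌈D * (1 - t)⁻¹⌉₊ + 1 ≤ l := le_trans (le_max_right _ _) hl
          calc D * (1 - t)⁻¹ ≤ (⌈D * (1 - t)⁻¹⌉₊ : ℝ) := Nat.le_ceil _
            _ ≤ l := by exact_mod_cast (by omega : ⌈D * (1 - t)⁻¹⌉₊ ≤ l)
        have hr2 := hrec2 l hlL₀
        have hvl : v l * l ≤ D * ∑ m ∈ Finset.range l, t ^ (l - m) * v m := by
          have hmul := mul_le_mul_of_nonneg_right hr2 (le_of_lt (pow_pos hρ'pos l))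
          calc v l * l = (u l * l) * ρ' ^ l := by rw [hvdef]; ring
            _ ≤ (D * ∑ m ∈ Finset.range l, ρ⁻¹ ^ (l - m) * u m) * ρ' ^ l := hmul
            _ = D * ∑ m ∈ Finset.range l, t ^ (l - m) * v m := by
                rw [mul_assoc, Finset.sum_mul]
                congr 1
                refine Finset.sum_congr rfl fun m hm => ?_
                have hmlt := Finset.mem_range.mp hm
                have hsplitpow : ρ' ^ l = ρ' ^ m * ρ' ^ (l - m) := by
                  rw [← pow_add]; congr 1; omega
                rw [hsplitpow, htdef, div_eq_mul_inv, mul_pow, hvdef]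
                ring
        have hsumB : ∑ m ∈ Finset.range l, t ^ (l - m) * v m ≤ (1 - t)⁻¹ * B := by
          calc ∑ m ∈ Finset.range l, t ^ (l - m) * v m
              ≤ ∑ m ∈ Finset.range l, t ^ (l - m) * B := by
                refine Finset.sum_le_sum fun m hm => ?_
                exact mul_le_mul_of_nonneg_left (ihl m (Finset.mem_range.mp hm)) (by positivity)
            _ = (∑ m ∈ Finset.range l, t ^ (l - m)) * B := by rw [Finset.sum_mul]
            _ ≤ (1 - t)⁻¹ * B :=
                mul_le_mul_of_nonneg_right (geom_tail_sum_le ht0.le ht1 l) hB0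
        have hfin : v l * l ≤ B * l := by
          calc v l * l ≤ D * ((1 - t)⁻¹ * B) :=
                hvl.trans (mul_le_mul_of_nonneg_left hsumB hDpos.le)
            _ = (D * (1 - t)⁻¹) * B := by ring
            _ ≤ (l : ℝ) * B := mul_le_mul_of_nonneg_right hDl hB0
            _ = B * l := mul_comm _ _
        exact le_of_mul_le_mul_right hfin hlpos
  -- final comparison with a geometric series
  have habs : ∀ l : ℕ, (fun ζ : Fin r → ℂ => ‖c l i ζ‖) =
      fun ζ : Fin r → ℂ => ‖c l i ζ‖ := by
    intro l; funext ζ; rfl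
  have hbound : ∀ l : ℕ, sSup ((fun ζ => ‖c l i ζ‖) '' K) * R ^ l ≤
      B * (R / ρ') ^ l := by
    intro l
    have h1 : sSup ((fun ζ => ‖c l i ζ‖) '' K) ≤ u l := by
      refine csSup_le ⟨_, ζ₀, hζ₀, rfl⟩ ?_
      rintro x ⟨ζ, hζ, rfl⟩
      calc ‖c l i ζ‖ ≤ s l ζ := by
            exact Finset.single_le_sum (f := fun j => ‖c l j ζ‖) (fun _ _ => norm_nonneg _)
              (Finset.mem_range.mpr (by omega))
        _ ≤ u l := hsu l ζ hζ
    calc sSup ((fun ζ => ‖c l i ζ‖) '' K) * R ^ l ≤ u l * R ^ l :=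
          mul_le_mul_of_nonneg_right h1 (by positivity)
      _ = v l * (R / ρ') ^ l := by
          rw [hvdef, div_pow]
          field_simp
      _ ≤ B * (R / ρ') ^ l := mul_le_mul_of_nonneg_right (hall l) (by positivity)
  refine Summable.of_nonneg_of_le ?_ hbound ?_
  · intro l
    have hbdd : BddAbove ((fun ζ => ‖c l i ζ‖) '' K) := by
      rw [habs l]
      exact (hK.image_of_continuousOn ((hccont l i).mono hKp).norm).bddAbove
    have h0 : 0 ≤ sSup ((fun ζ => ‖c l i ζ‖) '' K) :=
      le_trans (norm_nonneg (c l i ζ₀)) (le_csSup hbdd ⟨ζ₀, hζ₀, rfl⟩)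
    positivity
  · exact (summable_geometric_of_lt_one (by positivity)
      ((div_lt_one hρ'pos).mpr hRρ')).mul_left B
end
end
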